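/- arXiv:1102.4018 — 8 statements merged into one kernel-verified Lean document; each statement's English description precedes it below -/
import Mathlib

section
/- Let Z be a complex Hilbert space and T = L + A a continuous ℝ-linear bijection of Z with continuous inverse, where L is continuous ℂ-linear and A is continuous conjugate-linear. Then the following conditions are equivalent: (1) T is a symplectomorphism; (2) (L* − A*)∘(L + A) = Id; (3) (L* + A*)∘(L − A) = Id; (4) L*∘L − A*∘A = Id and L*∘A = A*∘L; (5) L* − A* is a symplectomorphism; (6) L − A is a symplectomorphism; (7) L∘L* − A∘A* = Id and A*∘L = L*∘A. -/
noncomputable section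

set_option linter.unusedSectionVars false

open ContinuousLinearMap (adjoint)

variable {Z : Type*} [NormedAddCommGroup Z] [InnerProductSpace ℂ Z] [CompleteSpace Z]

local notation "⟪" x ", " y "⟫" => @inner ℂ _ _ x y

/-- The symplectic form `σ(z₁, z₂) = Im ⟨z₁, z₂⟩` on a complex Hilbert space. -/
def symplecticForm (z₁ z₂ : Z) : ℝ := (inner ℂ z₁ z₂ : ℂ).im

/-- A symplectomorphism of `Z`: a continuous `ℝ`-linear bijection with continuous inverse
preserving the symplectic form `σ`. -/
def IsSymplectomorphism (f : Z → Z) : Prop :=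
  ∃ e : Z ≃L[ℝ] Z, (∀ z, e z = f z) ∧
    ∀ z₁ z₂ : Z, symplecticForm (f z₁) (f z₂) = symplecticForm z₁ z₂

private lemma eq_zero_of_im_eq_zero {w : Z} (h : ∀ z : Z, (inner ℂ z w : ℂ).im = 0) : w = 0 := by
  have h1 := h (Complex.I • w)
  rw [inner_smul_left] at h1
  simp only [Complex.conj_I, neg_mul, Complex.neg_im, Complex.mul_im, Complex.I_re, Complex.I_im,
    zero_mul, one_mul, zero_add, neg_eq_zero] at h1
  have h2 := inner_self_eq_norm_sq (𝕜 := ℂ) w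
  rw [RCLike.re_to_complex] at h2
  rw [h2] at h1
  have : ‖w‖ = 0 := by nlinarith [norm_nonneg w]
  exact norm_eq_zero.mp this

private lemma split_zero (f g : Z → Z)
    (hf : ∀ z, f (Complex.I • z) = Complex.I • f z)
    (hg : ∀ z, g (Complex.I • z) = -(Complex.I • g z))
    (h : ∀ z, f z + g z = 0) :
    (∀ z, f z = 0) ∧ (∀ z, g z = 0) := by
  have key : ∀ z, f z = 0 ∧ g z = 0 := by
    intro z
    have h1 := h z
    have h2 := h (Complex.I • z)
    rw [hf, hg] at h2
    have h3 : Complex.I • (f z - g z) = 0 := by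
      rw [smul_sub, sub_eq_add_neg]; exact h2
    have h4 : f z = g z :=
      sub_eq_zero.mp ((smul_eq_zero.mp h3).resolve_left Complex.I_ne_zero)
    have h5 : (2 : ℂ) • f z = 0 := by
      rw [two_smul]; nth_rewrite 2 [h4]; exact h1
    have h6 : f z = 0 := (smul_eq_zero.mp h5).resolve_left (by norm_num)
    exact ⟨h6, h4 ▸ h6⟩
  exact ⟨fun z => (key z).1, fun z => (key z).2⟩

private lemma sigma_key (L : Z →L[ℂ] Z) (A A' : Z →SL[starRingEnd ℂ] Z)
    (hA' : ∀ z₁ z₂ : Z, ⟪z₁, A z₂⟫ = ⟪z₂, A' z₁⟫) (z₁ z₂ : Z) :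
    symplecticForm (L z₁ + A z₁) (L z₂ + A z₂) - symplecticForm z₁ z₂
      = (⟪z₁, adjoint L (L z₂ + A z₂) - A' (L z₂ + A z₂) - z₂⟫).im := by
  set w := L z₂ + A z₂ with hw
  have e1 : ⟪z₁, adjoint L w - A' w - z₂⟫ = ⟪L z₁, w⟫ - ⟪w, A z₁⟫ - ⟪z₁, z₂⟫ := by
    rw [inner_sub_right, inner_sub_right, ContinuousLinearMap.adjoint_inner_right, hA' w z₁]
  have e2 : symplecticForm (L z₁ + A z₁) w = (⟪L z₁, w⟫ + ⟪A z₁, w⟫).im := by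
    rw [symplecticForm, inner_add_left]
  have e3 : (⟪w, A z₁⟫).im = -(⟪A z₁, w⟫).im := by
    rw [← inner_conj_symm w (A z₁), Complex.conj_im]
  rw [e1, e2, symplecticForm]
  simp only [Complex.sub_im, Complex.add_im, e3]
  ring

private lemma comp_of_sigma (L : Z →L[ℂ] Z) (A A' : Z →SL[starRingEnd ℂ] Z)
    (hA' : ∀ z₁ z₂ : Z, ⟪z₁, A z₂⟫ = ⟪z₂, A' z₁⟫)
    (hσ : ∀ z₁ z₂ : Z, symplecticForm (L z₁ + A z₁) (L z₂ + A z₂) = symplecticForm z₁ z₂) :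
    ∀ z : Z, adjoint L (L z + A z) - A' (L z + A z) = z := by
  intro z
  have h0 : ∀ z₁ : Z, (⟪z₁, adjoint L (L z + A z) - A' (L z + A z) - z⟫).im = 0 := by
    intro z₁
    rw [← sigma_key L A A' hA' z₁ z, hσ z₁ z, sub_self]
  have := eq_zero_of_im_eq_zero h0
  rwa [sub_eq_zero] at this

private lemma sigma_of_comp (L : Z →L[ℂ] Z) (A A' : Z →SL[starRingEnd ℂ] Z)
    (hA' : ∀ z₁ z₂ : Z, ⟪z₁, A z₂⟫ = ⟪z₂, A' z₁⟫)
    (hc : ∀ z : Z, adjoint L (L z + A z) - A' (L z + A z) = z) :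
    ∀ z₁ z₂ : Z, symplecticForm (L z₁ + A z₁) (L z₂ + A z₂) = symplecticForm z₁ z₂ := by
  intro z₁ z₂
  have := sigma_key L A A' hA' z₁ z₂
  rw [hc z₂, sub_self] at this
  rw [inner_zero_right] at this
  simp only [Complex.zero_im] at this
  linarith [this]

private def conjCLMtoReal (A : Z →SL[starRingEnd ℂ] Z) : Z →L[ℝ] Z where
  toFun := A
  map_add' := map_add A
  map_smul' := fun r z => by
    show A (r • z) = r • A z
    have h1 : r • z = ((r : ℂ)) • z := rfl
    have h2 : r • A z = ((r : ℂ)) • A z := rfl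
    rw [h1, A.map_smulₛₗ, h2, Complex.conj_ofReal]
  cont := A.continuous

private lemma TU_id (T : Z ≃L[ℝ] Z) (L : Z →L[ℂ] Z) (A A' : Z →SL[starRingEnd ℂ] Z)
    (hT : ∀ z : Z, T z = L z + A z)
    (h2 : ∀ z : Z, adjoint L (L z + A z) - A' (L z + A z) = z) :
    ∀ w : Z, L (adjoint L w - A' w) + A (adjoint L w - A' w) = w := by
  intro w
  have h1 : adjoint L (T (T.symm w)) - A' (T (T.symm w)) = T.symm w := by
    rw [hT]; exact h2 _
  rw [T.apply_symm_apply] at h1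
  have h3 := congrArg T h1
  rw [T.apply_symm_apply] at h3
  rw [hT] at h3
  exact h3

private lemma pack (T : Z ≃L[ℝ] Z) (L : Z →L[ℂ] Z) (A A' : Z →SL[starRingEnd ℂ] Z)
    (hT : ∀ z : Z, T z = L z + A z)
    (h2 : ∀ z : Z, adjoint L (L z + A z) - A' (L z + A z) = z) :
    (∀ w : Z, L (adjoint L w) - A (A' w) = w) ∧ (∀ w : Z, A (adjoint L w) - L (A' w) = 0) := by
  have hTU := TU_id T L A A' hT h2
  have expand : ∀ w : Z,
      (L (adjoint L w) - A (A' w) - w) + (A (adjoint L w) - L (A' w)) = 0 := by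
    intro w
    have h := hTU w
    rw [map_sub, map_sub] at h
    have e : (L (adjoint L w) - A (A' w) - w) + (A (adjoint L w) - L (A' w))
        = (L (adjoint L w) - L (A' w) + (A (adjoint L w) - A (A' w))) - w := by abel
    rw [e, h, sub_self]
  have hf : ∀ w : Z, (fun w => L (adjoint L w) - A (A' w) - w) (Complex.I • w)
      = Complex.I • (fun w => L (adjoint L w) - A (A' w) - w) w := by
    intro w
    simp only [map_smul, ContinuousLinearMap.map_smulₛₗ, Complex.conj_I, neg_smul, map_neg,
      smul_sub, smul_neg, neg_neg]
  have hg : ∀ w : Z, (fun w => A (adjoint L w) - L (A' w)) (Complex.I • w)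
      = -(Complex.I • (fun w => A (adjoint L w) - L (A' w)) w) := by
    intro w
    simp only [map_smul, ContinuousLinearMap.map_smulₛₗ, Complex.conj_I, neg_smul, map_neg,
      smul_sub, smul_neg, neg_neg, neg_sub]
    abel
  obtain ⟨k1, k2⟩ := split_zero _ _ hf hg expand
  constructor
  · intro w; have := k1 w; simpa [sub_eq_zero] using this
  · exact k2

set_option maxHeartbeats 1600000 in
private lemma hard (T : Z ≃L[ℝ] Z) (L : Z →L[ℂ] Z) (A A' : Z →SL[starRingEnd ℂ] Z)
    (hT : ∀ z : Z, T z = L z + A z)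
    (hA' : ∀ z₁ z₂ : Z, ⟪z₁, A z₂⟫ = ⟪z₂, A' z₁⟫)
    (h71 : ∀ w : Z, L (adjoint L w) - A (A' w) = w)
    (h72 : ∀ z : Z, A' (L z) = adjoint L (A z)) :
    ∀ z : Z, adjoint L (L z) - A' (A z) = z := by
  set X : Z →L[ℂ] Z := (adjoint L).comp L - A'.comp A - 1 with hXdef
  have hXapp : ∀ z : Z, X z = adjoint L (L z) - A' (A z) - z := by
    intro z; simp [hXdef]
  suffices hX : X = 0 by
    intro z
    have := congrArg (fun f => f z) (congrArg DFunLike.coe hX)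
    simp only [ContinuousLinearMap.zero_apply] at this
    rw [hXapp z, sub_eq_zero] at this
    exact this
  clear_value X
  by_contra hX0
  have hr : 0 < ‖X‖ := by
    rcases (norm_nonneg X).lt_or_eq with h | h
    · exact h
    · exact absurd (norm_eq_zero.mp h.symm) hX0
  set s : ℝ := ‖X‖ ^ 2 with hs
  clear_value s
  have hs0 : 0 < s := by rw [hs]; positivity
  -- self-adjointness of X
  have e1 : ∀ v w : Z, ⟪v, X w⟫ = ⟪L v, L w⟫ - ⟪A w, A v⟫ - ⟪v, w⟫ := by
    intro v w
    rw [hXapp w, inner_sub_right, inner_sub_right, ContinuousLinearMap.adjoint_inner_right,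
      ← hA' (A w) v]
  have hsa : ∀ v w : Z, ⟪v, X w⟫ = ⟪X v, w⟫ := by
    intro v w
    rw [e1 v w, ← inner_conj_symm (X v) w, e1 w v]
    simp only [map_sub, inner_conj_symm]
  -- the conjugate-linear map D
  set D : Z → Z := fun w => A (adjoint L w) - L (A' w) with hDdef
  have hDadd : ∀ v w : Z, D (v + w) = D v + D w := by
    intro v w; simp only [hDdef, map_add]; abel
  have hskew : ∀ v w : Z, ⟪v, D w⟫ = -⟪w, D v⟫ := by
    intro v w
    have k1 : ∀ a b : Z, ⟪a, D b⟫ = ⟪adjoint L b, A' a⟫ - ⟪adjoint L a, A' b⟫ := by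
      intro a b
      rw [hDdef]
      simp only
      rw [inner_sub_right, hA' a (adjoint L b), ← ContinuousLinearMap.adjoint_inner_left]
    rw [k1, k1]; ring
  have hDD : ∀ w : Z, ⟪w, D (D w)⟫ = -⟪D w, D w⟫ := fun w => hskew w (D w)
  -- T intertwines X and D
  have hTXpt : ∀ z : Z, L (X z) + A (X z) = D (L z + A z) := by
    intro z
    have eL : L (X z) = D (A z) := by
      rw [hXapp z, map_sub, map_sub, hDdef]
      simp only
      rw [← h72 z]
      have h3 : L (adjoint L (L z)) = L z + A (A' (L z)) :=
        sub_eq_iff_eq_add.mp (h71 (L z))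
      rw [h3]; abel
    have eA : A (X z) = D (L z) := by
      rw [hXapp z, map_sub, map_sub, hDdef]
      simp only
      have h3 : A (A' (A z)) = L (adjoint L (A z)) - A z := by
        have h4 := sub_eq_iff_eq_add.mp (h71 (A z))
        rw [h4]; abel
      rw [h3, ← h72 z]
      abel
    rw [eL, eA, ← hDadd]
    rw [show A z + L z = L z + A z by abel]
  have hTX : ∀ u : Z, T (X u) = D (T u) := by
    intro u; rw [hT (X u), hT u]; exact hTXpt u
  set Tc : Z →L[ℝ] Z := (T : Z →L[ℝ] Z) with hTc
  set Tsc : Z →L[ℝ] Z := (T.symm : Z →L[ℝ] Z) with hTsc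
  set K : ℝ := ‖Tsc‖ * ‖Tc‖ with hK
  have hKnn : 0 ≤ K := mul_nonneg (norm_nonneg _) (norm_nonneg _)
  -- main lower bound
  have ha : ∀ z : Z, s * ‖z‖ ≤ K * ‖X (X z) - s • z‖ := by
    intro z
    by_cases hz : z = 0
    · rw [hz]
      simp only [map_zero, smul_zero, sub_zero, norm_zero, mul_zero]
      exact le_refl 0
    · set u : Z := T z with hu
      have hu0 : u ≠ 0 := fun h => hz (by simpa [hu] using congrArg T.symm h)
      have hu1 : 0 < ‖u‖ := norm_pos_iff.mpr hu0
      have hT1 : T (X (X z) - s • z) = D (D u) - s • u := by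
        rw [map_sub, map_smul, hTX (X z), congrArg D (hTX z)]
      have hre : (s * ‖u‖ ^ 2 + ‖D u‖ ^ 2 : ℝ) ≤ ‖u‖ * ‖s • u - D (D u)‖ := by
        have h1 : RCLike.re ⟪u, s • u - D (D u)⟫ = (s * ‖u‖ ^ 2 + ‖D u‖ ^ 2 : ℝ) := by
          have hsm : (s : ℝ) • u = ((s : ℂ)) • u := rfl
          rw [inner_sub_right, hsm, inner_smul_right, hDD u, inner_self_eq_norm_sq_to_K,
            inner_self_eq_norm_sq_to_K]
          simp [RCLike.ofReal_pow]
          norm_cast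
        have h2 := re_inner_le_norm (𝕜 := ℂ) u (s • u - D (D u))
        rw [h1] at h2
        exact h2
      have hnr : ‖s • u - D (D u)‖ = ‖D (D u) - s • u‖ := norm_sub_rev _ _
      rw [hnr] at hre
      have hb1 : s * ‖u‖ ^ 2 ≤ ‖u‖ * ‖D (D u) - s • u‖ := by
        nlinarith [sq_nonneg ‖D u‖]
      have hb2 : s * ‖u‖ ≤ ‖T (X (X z) - s • z)‖ := by
        rw [hT1]
        nlinarith [hb1, hu1]
      have hz1 : ‖z‖ ≤ ‖Tsc‖ * ‖u‖ := by
        have h1 : Tsc u = z := by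
          simp [hTsc, hu]
        calc ‖z‖ = ‖Tsc u‖ := by rw [h1]
          _ ≤ ‖Tsc‖ * ‖u‖ := Tsc.le_opNorm u
      have hTle : ‖T (X (X z) - s • z)‖ ≤ ‖Tc‖ * ‖X (X z) - s • z‖ := by
        have h1 : Tc (X (X z) - s • z) = T (X (X z) - s • z) := rfl
        rw [← h1]
        exact Tc.le_opNorm _
      calc s * ‖z‖ ≤ s * (‖Tsc‖ * ‖u‖) := by
            exact mul_le_mul_of_nonneg_left hz1 hs0.le
        _ = ‖Tsc‖ * (s * ‖u‖) := by ring
        _ ≤ ‖Tsc‖ * ‖T (X (X z) - s • z)‖ := mul_le_mul_of_nonneg_left hb2 (norm_nonneg _)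
        _ ≤ ‖Tsc‖ * (‖Tc‖ * ‖X (X z) - s • z‖) := mul_le_mul_of_nonneg_left hTle (norm_nonneg _)
        _ = K * ‖X (X z) - s • z‖ := by rw [hK]; ring
  -- upper bound
  have hb : ∀ x : Z, ‖X (X x) - s • x‖ ^ 2 ≤ s * (s * ‖x‖ ^ 2 - ‖X x‖ ^ 2) := by
    intro x
    have h2' : RCLike.re ⟪X (X x), s • x⟫ = s * ‖X x‖ ^ 2 := by
      have hsm : (s : ℝ) • x = ((s : ℂ)) • x := rfl
      rw [hsm, inner_smul_right, ← hsa (X x) x, inner_self_eq_norm_sq_to_K]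
      simp [RCLike.ofReal_pow]
      norm_cast
      exact Or.inl rfl
    have hns : ‖s • x‖ ^ 2 = s ^ 2 * ‖x‖ ^ 2 := by
      rw [norm_smul, Real.norm_eq_abs, abs_of_nonneg hs0.le]
      ring
    have h1 : ‖X (X x) - s • x‖ ^ 2
        = ‖X (X x)‖ ^ 2 - 2 * (s * ‖X x‖ ^ 2) + s ^ 2 * ‖x‖ ^ 2 := by
      rw [norm_sub_sq (𝕜 := ℂ), h2', hns]
    have h3 : ‖X (X x)‖ ^ 2 ≤ s * ‖X x‖ ^ 2 := by
      have h4 := X.le_opNorm (X x)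
      nlinarith [norm_nonneg (X (X x)), norm_nonneg (X x), norm_nonneg X, hs]
    nlinarith [h1, h3]
  -- K ≥ 1
  obtain ⟨z₀, hz₀⟩ : ∃ z₀ : Z, X z₀ ≠ 0 := by
    by_contra h
    push_neg at h
    exact hX0 (ContinuousLinearMap.ext fun z => by simp [h z])
  have hz₀0 : z₀ ≠ 0 := by
    intro h
    apply hz₀
    rw [h, map_zero]
  have hK1 : 1 ≤ K := by
    have h1 : ‖z₀‖ ≤ ‖Tsc‖ * ‖Tc z₀‖ := by
      have h0 : Tsc (Tc z₀) = z₀ := T.symm_apply_apply z₀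
      calc ‖z₀‖ = ‖Tsc (Tc z₀)‖ := by rw [h0]
        _ ≤ ‖Tsc‖ * ‖Tc z₀‖ := Tsc.le_opNorm _
    have h2 : ‖Tc z₀‖ ≤ ‖Tc‖ * ‖z₀‖ := Tc.le_opNorm z₀
    have h3 : 0 < ‖z₀‖ := norm_pos_iff.mpr hz₀0
    nlinarith [norm_nonneg Tsc, norm_nonneg (Tc z₀)]
  have hK0 : 0 < K := lt_of_lt_of_le one_pos hK1
  set M : ℝ := s - s / K ^ 2 with hM
  have hM0 : 0 ≤ M := by
    rw [hM]
    have h1 : s / K ^ 2 ≤ s := by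
      apply div_le_self hs0.le
      nlinarith
    linarith
  have hMb : ∀ x : Z, ‖X x‖ ^ 2 ≤ M * ‖x‖ ^ 2 := by
    intro x
    have h1 := ha x
    have h2 := hb x
    have hl : 0 ≤ s * ‖x‖ := mul_nonneg hs0.le (norm_nonneg x)
    have h3 : (s * ‖x‖) ^ 2 ≤ (K * ‖X (X x) - s • x‖) ^ 2 := by
      nlinarith [mul_nonneg hKnn (norm_nonneg (X (X x) - s • x))]
    have h4 : (K * ‖X (X x) - s • x‖) ^ 2 ≤ K ^ 2 * (s * (s * ‖x‖ ^ 2 - ‖X x‖ ^ 2)) := by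
      nlinarith [sq_nonneg K]
    have h5 : s ^ 2 * ‖x‖ ^ 2 ≤ K ^ 2 * s ^ 2 * ‖x‖ ^ 2 - K ^ 2 * s * ‖X x‖ ^ 2 := by
      nlinarith [h3, h4]
    have h7 : K ^ 2 * s * (M * ‖x‖ ^ 2) = K ^ 2 * s ^ 2 * ‖x‖ ^ 2 - s ^ 2 * ‖x‖ ^ 2 := by
      rw [hM]
      field_simp
    have h8 : K ^ 2 * s * ‖X x‖ ^ 2 ≤ K ^ 2 * s * (M * ‖x‖ ^ 2) := by
      rw [h7]
      linarith [h5]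
    exact le_of_mul_le_mul_left h8 (by positivity)
  have hXle : ‖X‖ ≤ Real.sqrt M := by
    apply ContinuousLinearMap.opNorm_le_bound _ (Real.sqrt_nonneg M)
    intro x
    have h1 := hMb x
    have h2 : ‖X x‖ ≤ Real.sqrt (M * ‖x‖ ^ 2) := by
      rw [← Real.sqrt_sq (norm_nonneg (X x))]
      exact Real.sqrt_le_sqrt h1
    rwa [Real.sqrt_mul hM0, Real.sqrt_sq (norm_nonneg x)] at h2
  have hsM : s ≤ M := by
    rw [hs]
    calc ‖X‖ ^ 2 ≤ Real.sqrt M ^ 2 := by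
          nlinarith [hXle, norm_nonneg X, Real.sqrt_nonneg M]
      _ = M := Real.sq_sqrt hM0
  rw [hM] at hsM
  have hc1 : s / K ^ 2 ≤ 0 := by linarith
  have hc2 : 0 < s / K ^ 2 := by positivity
  linarith

set_option maxHeartbeats 2000000 in
/-- Equivalent characterizations of symplectomorphisms `T = L + A`. -/
theorem stmt_1 (T : Z ≃L[ℝ] Z) (L : Z →L[ℂ] Z) (A A' : Z →SL[starRingEnd ℂ] Z)
    (hT : ∀ z : Z, T z = L z + A z)
    (hA' : ∀ z₁ z₂ : Z, (inner ℂ z₁ (A z₂) : ℂ) = (inner ℂ z₂ (A' z₁) : ℂ)) :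
    List.TFAE [
      IsSymplectomorphism (T : Z → Z),
      ∀ z : Z, ContinuousLinearMap.adjoint L (L z + A z) - A' (L z + A z) = z,
      ∀ z : Z, ContinuousLinearMap.adjoint L (L z - A z) + A' (L z - A z) = z,
      (∀ z : Z, ContinuousLinearMap.adjoint L (L z) - A' (A z) = z) ∧
        (∀ z : Z, ContinuousLinearMap.adjoint L (A z) = A' (L z)),
      IsSymplectomorphism (fun z : Z => ContinuousLinearMap.adjoint L z - A' z),
      IsSymplectomorphism (fun z : Z => L z - A z),
      (∀ z : Z, L (ContinuousLinearMap.adjoint L z) - A (A' z) = z) ∧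
        (∀ z : Z, A' (L z) = ContinuousLinearMap.adjoint L (A z))
    ] := by
  have hA2 : ∀ z₁ z₂ : Z, ⟪z₁, A' z₂⟫ = ⟪z₂, A z₁⟫ := fun z₁ z₂ => (hA' z₂ z₁).symm
  have hpairU : ∀ z₁ z₂ : Z, ⟪z₁, (-A') z₂⟫ = ⟪z₂, (-A) z₁⟫ := by
    intro z₁ z₂
    simp only [ContinuousLinearMap.neg_apply, inner_neg_right]
    rw [hA2]
  have hpairA : ∀ z₁ z₂ : Z, ⟪z₁, (-A) z₂⟫ = ⟪z₂, (-A') z₁⟫ := by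
    intro z₁ z₂
    simp only [ContinuousLinearMap.neg_apply, inner_neg_right]
    rw [hA']
  -- implications
  have i12 : IsSymplectomorphism (T : Z → Z) →
      ∀ z : Z, adjoint L (L z + A z) - A' (L z + A z) = z := by
    rintro ⟨e, he, hσ⟩
    refine comp_of_sigma L A A' hA' ?_
    intro z₁ z₂
    simpa only [hT] using hσ z₁ z₂
  have i21 : (∀ z : Z, adjoint L (L z + A z) - A' (L z + A z) = z) →
      IsSymplectomorphism (T : Z → Z) := by
    intro h2
    refine ⟨T, fun z => rfl, ?_⟩
    intro z₁ z₂
    simpa only [hT] using sigma_of_comp L A A' hA' h2 z₁ z₂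
  have i24 : (∀ z : Z, adjoint L (L z + A z) - A' (L z + A z) = z) →
      (∀ z : Z, adjoint L (L z) - A' (A z) = z) ∧
        (∀ z : Z, adjoint L (A z) = A' (L z)) := by
    intro h2
    have expand : ∀ z : Z,
        (adjoint L (L z) - A' (A z) - z) + (adjoint L (A z) - A' (L z)) = 0 := by
      intro z
      have h := h2 z
      rw [map_add, map_add] at h
      have e : (adjoint L (L z) - A' (A z) - z) + (adjoint L (A z) - A' (L z))
          = (adjoint L (L z) + adjoint L (A z) - (A' (L z) + A' (A z))) - z := by abel
      rw [e, h, sub_self]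
    have hf : ∀ z : Z, (fun z => adjoint L (L z) - A' (A z) - z) (Complex.I • z)
        = Complex.I • (fun z => adjoint L (L z) - A' (A z) - z) z := by
      intro z
      simp only [map_smul, ContinuousLinearMap.map_smulₛₗ, Complex.conj_I, neg_smul, map_neg,
        smul_sub, smul_neg, neg_neg]
    have hg : ∀ z : Z, (fun z => adjoint L (A z) - A' (L z)) (Complex.I • z)
        = -(Complex.I • (fun z => adjoint L (A z) - A' (L z)) z) := by
      intro z
      simp only [map_smul, ContinuousLinearMap.map_smulₛₗ, Complex.conj_I, neg_smul, map_neg,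
        smul_sub, smul_neg, neg_neg, neg_sub]
      abel
    obtain ⟨k1, k2⟩ := split_zero _ _ hf hg expand
    exact ⟨fun z => by simpa [sub_eq_zero] using k1 z,
      fun z => by simpa [sub_eq_zero] using k2 z⟩
  have i43 : ((∀ z : Z, adjoint L (L z) - A' (A z) = z) ∧
        (∀ z : Z, adjoint L (A z) = A' (L z))) →
      ∀ z : Z, adjoint L (L z - A z) + A' (L z - A z) = z := by
    rintro ⟨h41, h42⟩ z
    rw [map_sub, map_sub, h42 z]
    conv_rhs => rw [← h41 z]
    abel
  have i34 : (∀ z : Z, adjoint L (L z - A z) + A' (L z - A z) = z) →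
      (∀ z : Z, adjoint L (L z) - A' (A z) = z) ∧
        (∀ z : Z, adjoint L (A z) = A' (L z)) := by
    intro h3
    have expand : ∀ z : Z,
        (adjoint L (L z) - A' (A z) - z) + (A' (L z) - adjoint L (A z)) = 0 := by
      intro z
      have h := h3 z
      rw [map_sub, map_sub] at h
      have e : (adjoint L (L z) - A' (A z) - z) + (A' (L z) - adjoint L (A z))
          = (adjoint L (L z) - adjoint L (A z) + (A' (L z) - A' (A z))) - z := by abel
      rw [e, h, sub_self]
    have hf : ∀ z : Z, (fun z => adjoint L (L z) - A' (A z) - z) (Complex.I • z)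
        = Complex.I • (fun z => adjoint L (L z) - A' (A z) - z) z := by
      intro z
      simp only [map_smul, ContinuousLinearMap.map_smulₛₗ, Complex.conj_I, neg_smul, map_neg,
        smul_sub, smul_neg, neg_neg]
    have hg : ∀ z : Z, (fun z => A' (L z) - adjoint L (A z)) (Complex.I • z)
        = -(Complex.I • (fun z => A' (L z) - adjoint L (A z)) z) := by
      intro z
      simp only [map_smul, ContinuousLinearMap.map_smulₛₗ, Complex.conj_I, neg_smul, map_neg,
        smul_sub, smul_neg, neg_neg, neg_sub]
      abel
    obtain ⟨k1, k2⟩ := split_zero _ _ hf hg expand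
    refine ⟨fun z => by simpa [sub_eq_zero] using k1 z, fun z => ?_⟩
    have h := k2 z
    simp only [sub_eq_zero] at h
    exact h.symm
  have i42 : ((∀ z : Z, adjoint L (L z) - A' (A z) = z) ∧
        (∀ z : Z, adjoint L (A z) = A' (L z))) →
      ∀ z : Z, adjoint L (L z + A z) - A' (L z + A z) = z := by
    rintro ⟨h41, h42⟩ z
    rw [map_add, map_add, h42 z]
    conv_rhs => rw [← h41 z]
    abel
  have i47 : ((∀ z : Z, adjoint L (L z) - A' (A z) = z) ∧
        (∀ z : Z, adjoint L (A z) = A' (L z))) →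
      (∀ z : Z, L (adjoint L z) - A (A' z) = z) ∧
        (∀ z : Z, A' (L z) = adjoint L (A z)) := by
    intro h4
    exact ⟨(pack T L A A' hT (i42 h4)).1, fun z => (h4.2 z).symm⟩
  have i74 : ((∀ z : Z, L (adjoint L z) - A (A' z) = z) ∧
        (∀ z : Z, A' (L z) = adjoint L (A z))) →
      (∀ z : Z, adjoint L (L z) - A' (A z) = z) ∧
        (∀ z : Z, adjoint L (A z) = A' (L z)) := by
    intro h7
    exact ⟨hard T L A A' hT hA' h7.1 h7.2, fun z => (h7.2 z).symm⟩
  have i25 : (∀ z : Z, adjoint L (L z + A z) - A' (L z + A z) = z) →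
      IsSymplectomorphism (fun z : Z => adjoint L z - A' z) := by
    intro h2
    have hTU := TU_id T L A A' hT h2
    have hUe : ∀ z : Z, T.symm z = adjoint L z - A' z := by
      intro z
      rw [ContinuousLinearEquiv.symm_apply_eq, hT]
      exact (hTU z).symm
    refine ⟨T.symm, hUe, ?_⟩
    have hc : ∀ z : Z, adjoint (adjoint L) ((adjoint L) z + (-A') z)
        - (-A) ((adjoint L) z + (-A') z) = z := by
      intro z
      simp only [ContinuousLinearMap.adjoint_adjoint, ContinuousLinearMap.neg_apply,
        sub_neg_eq_add, ← sub_eq_add_neg]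
      exact hTU z
    have h := sigma_of_comp (adjoint L) (-A') (-A) hpairU hc
    intro z₁ z₂
    have h' := h z₁ z₂
    simp only [ContinuousLinearMap.neg_apply, ← sub_eq_add_neg] at h'
    exact h'
  have i52 : IsSymplectomorphism (fun z : Z => adjoint L z - A' z) →
      ∀ z : Z, adjoint L (L z + A z) - A' (L z + A z) = z := by
    rintro ⟨e, he, hσ⟩
    have hσ' : ∀ z₁ z₂ : Z, symplecticForm ((adjoint L) z₁ + (-A') z₁)
        ((adjoint L) z₂ + (-A') z₂) = symplecticForm z₁ z₂ := by
      intro z₁ z₂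
      simp only [ContinuousLinearMap.neg_apply, ← sub_eq_add_neg]
      exact hσ z₁ z₂
    have hc := comp_of_sigma (adjoint L) (-A') (-A) hpairU hσ'
    have hTU : ∀ w : Z, L (adjoint L w - A' w) + A (adjoint L w - A' w) = w := by
      intro w
      have h := hc w
      simp only [ContinuousLinearMap.adjoint_adjoint, ContinuousLinearMap.neg_apply,
        sub_neg_eq_add, ← sub_eq_add_neg] at h
      exact h
    intro z
    have h1 : T (adjoint L (T z) - A' (T z)) = T z := by
      rw [hT (adjoint L (T z) - A' (T z))]
      exact hTU (T z)
    have h2 := T.injective h1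
    rw [hT z] at h2
    exact h2
  have i36 : (∀ z : Z, adjoint L (L z - A z) + A' (L z - A z) = z) →
      IsSymplectomorphism (fun z : Z => L z - A z) := by
    intro h3
    have h4 := i34 h3
    have h2 := i42 h4
    obtain ⟨p1, pbonus⟩ := pack T L A A' hT h2
    set f : Z →L[ℝ] Z := L.restrictScalars ℝ - conjCLMtoReal A with hfd
    set g : Z →L[ℝ] Z := (adjoint L).restrictScalars ℝ + conjCLMtoReal A' with hgd
    have hgf : Function.LeftInverse g f := by
      intro z
      show adjoint L (L z - A z) + A' (L z - A z) = z
      exact h3 z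
    have hfg : Function.RightInverse g f := by
      intro w
      show L (adjoint L w + A' w) - A (adjoint L w + A' w) = w
      rw [map_add, map_add]
      have hb := pbonus w
      have hp := p1 w
      have e : L (adjoint L w) + L (A' w) - (A (adjoint L w) + A (A' w))
          = (L (adjoint L w) - A (A' w)) - (A (adjoint L w) - L (A' w)) := by abel
      rw [e, hp, hb, sub_zero]
    refine ⟨ContinuousLinearEquiv.equivOfInverse f g hgf hfg, fun z => rfl, ?_⟩
    have hc : ∀ z : Z, adjoint L (L z + (-A) z) - (-A') (L z + (-A) z) = z := by
      intro z
      simp only [ContinuousLinearMap.neg_apply, sub_neg_eq_add, ← sub_eq_add_neg]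
      exact h3 z
    have h := sigma_of_comp L (-A) (-A') hpairA hc
    intro z₁ z₂
    have h' := h z₁ z₂
    simp only [ContinuousLinearMap.neg_apply, ← sub_eq_add_neg] at h'
    exact h'
  have i63 : IsSymplectomorphism (fun z : Z => L z - A z) →
      ∀ z : Z, adjoint L (L z - A z) + A' (L z - A z) = z := by
    rintro ⟨e, he, hσ⟩
    have hσ' : ∀ z₁ z₂ : Z, symplecticForm (L z₁ + (-A) z₁) (L z₂ + (-A) z₂)
        = symplecticForm z₁ z₂ := by
      intro z₁ z₂
      simp only [ContinuousLinearMap.neg_apply, ← sub_eq_add_neg]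
      exact hσ z₁ z₂
    have hc := comp_of_sigma L (-A) (-A') hpairA hσ'
    intro z
    have h := hc z
    simp only [ContinuousLinearMap.neg_apply, sub_neg_eq_add, ← sub_eq_add_neg] at h
    exact h
  tfae_have 1 → 2 := i12
  tfae_have 2 → 1 := i21
  tfae_have 2 → 4 := i24
  tfae_have 4 → 3 := i43
  tfae_have 3 → 4 := i34
  tfae_have 4 → 2 := i42
  tfae_have 4 → 7 := i47
  tfae_have 7 → 4 := i74
  tfae_have 2 → 5 := i25
  tfae_have 5 → 2 := i52
  tfae_have 3 → 6 := i36
  tfae_have 6 → 3 := i63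
  tfae_finish
end
end

section
/- Let Z be a complex Hilbert space and T = L + A a symplectomorphism of Z, with L continuous ℂ-linear and A continuous conjugate-linear. Then L is bijective with continuous inverse; in particular L*∘L = Id + A*∘A and L∘L* = Id + A∘A*, so L and L* are injective with closed dense range. -/
/-- If `T = L + A` is a symplectomorphism of the complex Hilbert space `Z`
(`L` continuous `ℂ`-linear, `A` continuous conjugate-linear with adjoint `A'`), then `L` is
bijective with continuous inverse; in particular `L*∘L = Id + A*∘A` and `L∘L* = Id + A∘A*`,
so `L` and `L*` are injective with closed dense range. -/
theorem stmt_2 {Z : Type*} [NormedAddCommGroup Z] [InnerProductSpace ℂ Z] [CompleteSpace Z]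
    (T : Z ≃L[ℝ] Z) (L : Z →L[ℂ] Z) (A A' : Z →SL[starRingEnd ℂ] Z)
    (hT : ∀ z : Z, T z = L z + A z)
    (hA' : ∀ z₁ z₂ : Z, (inner ℂ z₁ (A z₂) : ℂ) = (inner ℂ z₂ (A' z₁) : ℂ))
    (hsymp : ∀ z₁ z₂ : Z, (inner ℂ (T z₁) (T z₂) : ℂ).im = (inner ℂ z₁ z₂ : ℂ).im) :
    (∃ e : Z ≃L[ℂ] Z, ∀ z : Z, e z = L z) ∧
    (∀ z : Z, ContinuousLinearMap.adjoint L (L z) = z + A' (A z)) ∧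
    (∀ z : Z, L (ContinuousLinearMap.adjoint L z) = z + A (A' z)) ∧
    Function.Injective (L : Z → Z) ∧
    Function.Injective (ContinuousLinearMap.adjoint L : Z → Z) ∧
    IsClosed (Set.range (L : Z → Z)) ∧ Dense (Set.range (L : Z → Z)) ∧
    IsClosed (Set.range (ContinuousLinearMap.adjoint L : Z → Z)) ∧
    Dense (Set.range (ContinuousLinearMap.adjoint L : Z → Z)) := by
  set L' := ContinuousLinearMap.adjoint L with hL'def
  -- nondegeneracy of the symplectic form
  have hnd : ∀ w : Z, (∀ u : Z, (inner ℂ u w : ℂ).im = 0) → w = 0 := by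
    intro w hw
    have h := hw (Complex.I • w)
    rw [inner_smul_left, @inner_self_eq_norm_sq_to_K ℂ] at h
    simp [Complex.conj_I, Complex.ofReal_pow] at h
    norm_cast at h
    simpa [pow_eq_zero_iff] using h
  -- key identity : (L* - A') ∘ T = id
  have hkey : ∀ z : Z, L' (T z) - A' (T z) = z := by
    intro z
    have hz : ∀ u : Z, (inner ℂ u (L' (T z) - A' (T z) - z) : ℂ).im = 0 := by
      intro u
      have hs := hsymp u z
      rw [hT u, inner_add_left] at hs
      have h1 : (inner ℂ (L u) (T z) : ℂ) = inner ℂ u (L' (T z)) :=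
        (ContinuousLinearMap.adjoint_inner_right L u (T z)).symm
      have h2 : (inner ℂ (A u) (T z) : ℂ) = starRingEnd ℂ (inner ℂ u (A' (T z))) := by
        rw [← inner_conj_symm, hA' (T z) u]
      rw [h1, h2] at hs
      simp only [inner_sub_right, Complex.sub_im, Complex.add_im, Complex.conj_im] at hs ⊢
      linarith
    exact sub_eq_zero.mp (hnd _ hz)
  have hkey' : ∀ z : Z, L' (L z + A z) - A' (L z + A z) = z := by
    intro z; rw [← hT]; exact hkey z
  -- T ∘ (L* - A') = id
  have hS : ∀ w : Z, L' w - A' w = T.symm w := by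
    intro w
    have h := hkey (T.symm w)
    rwa [T.apply_symm_apply] at h
  have hkeyT : ∀ z : Z, L (L' z - A' z) + A (L' z - A' z) = z := by
    intro z
    rw [← hT, hS]
    exact T.apply_symm_apply z
  -- L*L = 1 + A'A
  have hC1 : ∀ z : Z, L' (L z) = z + A' (A z) := by
    intro z
    have h1 := hkey' z
    simp only [map_add] at h1
    have h2 := hkey' (Complex.I • z)
    simp only [map_add, map_smul, map_smulₛₗ, Complex.conj_I, Complex.conj_neg_I, neg_smul,
      smul_neg, map_neg, neg_neg] at h2
    linear_combination (norm := (match_scalars <;> (ring_nf; norm_num [Complex.I_sq])))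
      ((2:ℂ)⁻¹) • h1 + (-(Complex.I)/2) • h2
  -- LL* = 1 + AA'
  have hC2 : ∀ z : Z, L (L' z) = z + A (A' z) := by
    intro z
    have h1 := hkeyT z
    simp only [map_sub, map_add] at h1
    have h2 := hkeyT (Complex.I • z)
    simp only [map_add, map_sub, map_smul, map_smulₛₗ, Complex.conj_I, Complex.conj_neg_I,
      neg_smul, smul_neg, map_neg, neg_neg] at h2
    linear_combination (norm := (match_scalars <;> (ring_nf; norm_num [Complex.I_sq])))
      ((2:ℂ)⁻¹) • h1 + (-(Complex.I)/2) • h2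
  -- norm estimates
  have hnorm1 : ∀ z : Z, ‖z‖ ≤ ‖L z‖ := by
    intro z
    have h := ContinuousLinearMap.adjoint_inner_right L z (L z)
    rw [← hL'def, hC1 z, inner_add_right, ← hA' (A z) z, @inner_self_eq_norm_sq_to_K ℂ,
      @inner_self_eq_norm_sq_to_K ℂ, @inner_self_eq_norm_sq_to_K ℂ] at h
    norm_cast at h
    nlinarith [norm_nonneg (L z), norm_nonneg z, norm_nonneg (A z), sq_nonneg (‖A z‖)]
  have hnorm2 : ∀ z : Z, ‖z‖ ≤ ‖L' z‖ := by
    intro z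
    have h := ContinuousLinearMap.adjoint_inner_left L (L' z) z
    rw [← hL'def, hC2 z, inner_add_right, hA' z (A' z), @inner_self_eq_norm_sq_to_K ℂ,
      @inner_self_eq_norm_sq_to_K ℂ, @inner_self_eq_norm_sq_to_K ℂ] at h
    norm_cast at h
    nlinarith [norm_nonneg (L' z), norm_nonneg z, norm_nonneg (A' z), sq_nonneg (‖A' z‖)]
  -- injectivity
  have hinjL : Function.Injective (L : Z → Z) := by
    intro x y hxy
    have h := hnorm1 (x - y)
    rw [map_sub, hxy, sub_self, norm_zero] at h
    exact sub_eq_zero.mp (norm_le_zero_iff.mp h)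
  have hinjL' : Function.Injective (L' : Z → Z) := by
    intro x y hxy
    have h := hnorm2 (x - y)
    rw [map_sub, hxy, sub_self, norm_zero] at h
    exact sub_eq_zero.mp (norm_le_zero_iff.mp h)
  -- closed range
  have hclosedL : IsClosed (Set.range (L : Z → Z)) := by
    have hal : AntilipschitzWith 1 (L : Z → Z) :=
      ContinuousLinearMap.antilipschitz_of_bound L (fun x => by simpa using hnorm1 x)
    exact hal.isClosed_range L.uniformContinuous
  have hclosedL' : IsClosed (Set.range (L' : Z → Z)) := by
    have hal : AntilipschitzWith 1 (L' : Z → Z) :=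
      ContinuousLinearMap.antilipschitz_of_bound L' (fun x => by simpa using hnorm2 x)
    exact hal.isClosed_range L'.uniformContinuous
  -- dense range
  have hdenseL : Dense (Set.range (L : Z → Z)) := by
    have horth : (LinearMap.range (L : Z →ₗ[ℂ] Z))ᗮ = ⊥ := by
      rw [Submodule.eq_bot_iff]
      intro v hv
      have h0 : (inner ℂ (L (L' v)) v : ℂ) = 0 :=
        hv _ (LinearMap.mem_range_self _ _)
      have ha : (inner ℂ (L' v) (L' v) : ℂ) = inner ℂ v (L (L' v)) :=
        ContinuousLinearMap.adjoint_inner_left L (L' v) v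
      have hb : (inner ℂ v (L (L' v)) : ℂ) = 0 := by
        rw [← inner_conj_symm, h0, map_zero]
      have h2 : L' v = 0 := inner_self_eq_zero.mp (ha.trans hb)
      have h3 := hnorm2 v
      rw [h2, norm_zero] at h3
      exact norm_le_zero_iff.mp h3
    have := Submodule.dense_iff_topologicalClosure_eq_top.mpr
      (Submodule.topologicalClosure_eq_top_iff.mpr horth)
    simpa [LinearMap.coe_range] using this
  have hdenseL' : Dense (Set.range (L' : Z → Z)) := by
    have horth : (LinearMap.range (L' : Z →ₗ[ℂ] Z))ᗮ = ⊥ := by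
      rw [Submodule.eq_bot_iff]
      intro v hv
      have h0 : (inner ℂ (L' (L v)) v : ℂ) = 0 :=
        hv _ (LinearMap.mem_range_self _ _)
      have ha : (inner ℂ v (L' (L v)) : ℂ) = inner ℂ (L v) (L v) :=
        ContinuousLinearMap.adjoint_inner_right L v (L v)
      have hb : (inner ℂ v (L' (L v)) : ℂ) = 0 := by
        rw [← inner_conj_symm, h0, map_zero]
      have h2 : L v = 0 := inner_self_eq_zero.mp (ha.symm.trans hb)
      have h3 := hnorm1 v
      rw [h2, norm_zero] at h3
      exact norm_le_zero_iff.mp h3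
    have := Submodule.dense_iff_topologicalClosure_eq_top.mpr
      (Submodule.topologicalClosure_eq_top_iff.mpr horth)
    simpa [LinearMap.coe_range] using this
  -- bijectivity and continuous inverse
  have hsurjL : Function.Surjective (L : Z → Z) := by
    have h1 : Set.range (L : Z → Z) = Set.univ := by
      rw [← hclosedL.closure_eq, hdenseL.closure_eq]
    exact Set.range_eq_univ.mp h1
  refine ⟨⟨ContinuousLinearEquiv.ofBijective L (LinearMap.ker_eq_bot.mpr hinjL)
      (LinearMap.range_eq_top.mpr hsurjL), fun z => ?_⟩,
    hC1, hC2, hinjL, hinjL', hclosedL, hdenseL, hclosedL', hdenseL'⟩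
  rw [ContinuousLinearEquiv.coeFn_ofBijective]
end

section
/- Let Z be a complex Hilbert space and T = L + A a symplectomorphism of Z, with L continuous ℂ-linear and A continuous conjugate-linear. Then ‖L z‖ ≥ ‖z‖ for every z ∈ Z; in particular the operator norm of L satisfies ‖L‖ ≥ 1. -/
/-- If `T = L + A` is a symplectomorphism of the (nonzero) complex Hilbert
space `Z`, with `L` continuous `ℂ`-linear and `A` continuous conjugate-linear, then
`‖L z‖ ≥ ‖z‖` for every `z`, and in particular `‖L‖ ≥ 1`. -/
theorem stmt_3 {Z : Type*} [NormedAddCommGroup Z] [InnerProductSpace ℂ Z] [CompleteSpace Z]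
    [Nontrivial Z]
    (T : Z ≃L[ℝ] Z) (L : Z →L[ℂ] Z) (A : Z →SL[starRingEnd ℂ] Z)
    (hT : ∀ z : Z, T z = L z + A z)
    (hsymp : ∀ z₁ z₂ : Z, (inner ℂ (T z₁) (T z₂) : ℂ).im = (inner ℂ z₁ z₂ : ℂ).im) :
    (∀ z : Z, ‖z‖ ≤ ‖L z‖) ∧ 1 ≤ ‖L‖ := by
  have key : ∀ z : Z, ‖z‖ ≤ ‖L z‖ := by
    intro z
    have h := hsymp z (Complex.I • z)
    rw [hT z, hT (Complex.I • z)] at h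
    have hA : A (Complex.I • z) = (-Complex.I) • A z := by
      rw [map_smulₛₗ]; simp
    have hL : L (Complex.I • z) = Complex.I • L z := map_smul L _ _
    rw [hA, hL] at h
    simp only [inner_add_left, inner_add_right, inner_smul_right] at h
    rw [inner_self_eq_norm_sq_to_K, inner_self_eq_norm_sq_to_K, inner_self_eq_norm_sq_to_K,
      ← inner_conj_symm (A z) (L z)] at h
    set c : ℂ := inner ℂ (L z) (A z) with hc
    simp [Complex.ext_iff, Complex.mul_im, Complex.mul_re, ← Complex.ofReal_pow] at h
    nlinarith [norm_nonneg z, norm_nonneg (L z), norm_nonneg (A z), sq_nonneg (‖A z‖)]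
  refine ⟨key, ?_⟩
  obtain ⟨x, hx⟩ := exists_ne (0 : Z)
  have h1 : ‖x‖ ≤ ‖L‖ * ‖x‖ := (key x).trans (L.le_opNorm x)
  have h2 : 0 < ‖x‖ := norm_pos_iff.mpr hx
  exact le_of_mul_le_mul_right (by linarith) h2
end

section
/- Let Z be a complex Hilbert space and T = L + A a symplectomorphism of Z, with L continuous ℂ-linear and A continuous conjugate-linear. Then the inverse of T is T⁻¹ = L* − A*, and T⁻¹ is again a symplectomorphism. -/
lemma im_inner_eq_zero_imp {Z : Type*} [NormedAddCommGroup Z] [InnerProductSpace ℂ Z]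
    (u : Z) (h : ∀ z : Z, (inner ℂ u z : ℂ).im = 0) : u = 0 := by
  have h1 := h ((Complex.I : ℂ) • u)
  rw [inner_smul_right] at h1
  have h2 : (inner ℂ u u : ℂ) = (‖u‖ : ℂ) ^ 2 := inner_self_eq_norm_sq_to_K u
  rw [h2] at h1
  simp [Complex.mul_im, ← Complex.ofReal_pow] at h1
  simpa using h1

/-- If `T = L + A` is a symplectomorphism of the complex Hilbert space `Z`
(`L` continuous `ℂ`-linear, `A` continuous conjugate-linear with adjoint `A'`), then
`T⁻¹ = L* - A'`, and `T⁻¹` is again a symplectomorphism. -/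
theorem stmt_4 {Z : Type*} [NormedAddCommGroup Z] [InnerProductSpace ℂ Z] [CompleteSpace Z]
    (T : Z ≃L[ℝ] Z) (L : Z →L[ℂ] Z) (A A' : Z →SL[starRingEnd ℂ] Z)
    (hT : ∀ z : Z, T z = L z + A z)
    (hA' : ∀ z₁ z₂ : Z, (inner ℂ z₁ (A z₂) : ℂ) = (inner ℂ z₂ (A' z₁) : ℂ))
    (hsymp : ∀ z₁ z₂ : Z, (inner ℂ (T z₁) (T z₂) : ℂ).im = (inner ℂ z₁ z₂ : ℂ).im) :
    (∀ z : Z, T.symm z = ContinuousLinearMap.adjoint L z - A' z) ∧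
    (∀ z₁ z₂ : Z, (inner ℂ (T.symm z₁) (T.symm z₂) : ℂ).im = (inner ℂ z₁ z₂ : ℂ).im) := by
  constructor
  · intro w
    have key : ∀ z : Z, (inner ℂ (T.symm w - (ContinuousLinearMap.adjoint L w - A' w)) z : ℂ).im = 0 := by
      intro z
      have h1 : (inner ℂ (T.symm w) z : ℂ).im = (inner ℂ w (T z) : ℂ).im := by
        have := hsymp (T.symm w) z
        rw [T.apply_symm_apply] at this
        exact this.symm
      have h2 : (inner ℂ w (T z) : ℂ).im
          = (inner ℂ (ContinuousLinearMap.adjoint L w) z : ℂ).im + (inner ℂ z (A' w) : ℂ).im := by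
        rw [hT, inner_add_right]
        rw [Complex.add_im, ContinuousLinearMap.adjoint_inner_left, hA']
      have h3 : (inner ℂ z (A' w) : ℂ).im = -(inner ℂ (A' w) z : ℂ).im := by
        rw [← inner_conj_symm (A' w) z, Complex.conj_im, neg_neg]
      rw [inner_sub_left, inner_sub_left, Complex.sub_im, Complex.sub_im, h1, h2, h3]
      ring
    have := im_inner_eq_zero_imp _ key
    have := sub_eq_zero.mp this
    exact this
  · intro z₁ z₂
    have := hsymp (T.symm z₁) (T.symm z₂)
    rw [T.apply_symm_apply, T.apply_symm_apply] at this
    exact this.symm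
end

section
/- Let E be a nonzero finite-dimensional complex Hilbert space and f : E → E a conjugate-linear map such that f ∘ f = Id and ⟨z₁, f z₂⟩ = ⟨z₂, f z₁⟩ for all z₁, z₂ ∈ E. Then there exists an orthonormal basis (u_j) of E such that f(u_j) = u_j for every j. -/
/-- If `E` is a nonzero finite-dimensional complex Hilbert space and
`f : E → E` is conjugate-linear with `f ∘ f = Id` and `⟨z₁, f z₂⟩ = ⟨z₂, f z₁⟩`, then there
is an orthonormal basis of `E` consisting of fixed points of `f`. -/
theorem stmt_5 {E : Type*} [NormedAddCommGroup E] [InnerProductSpace ℂ E]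
    [FiniteDimensional ℂ E] [Nontrivial E]
    (f : E →ₗ⋆[ℂ] E) (hff : ∀ z : E, f (f z) = z)
    (hsym : ∀ z₁ z₂ : E, (inner ℂ z₁ (f z₂) : ℂ) = (inner ℂ z₂ (f z₁) : ℂ)) :
    ∃ b : OrthonormalBasis (Fin (Module.finrank ℂ E)) ℂ E, ∀ j, f (b j) = b j := by
  letI : InnerProductSpace ℝ E := InnerProductSpace.complexToReal
  -- the real subspace of fixed points
  set F : Submodule ℝ E :=
    { carrier := {z | f z = z}
      add_mem' := by
        intro a b ha hb
        simp only [Set.mem_setOf_eq] at *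
        rw [map_add, ha, hb]
      zero_mem' := by simp
      smul_mem' := by
        intro r z hz
        simp only [Set.mem_setOf_eq] at *
        rw [← algebraMap_smul ℂ r z, map_smulₛₗ, hz]
        congr 1
        simp [Complex.ext_iff] } with hF
  have hmemF : ∀ z : E, z ∈ F ↔ f z = z := fun z => Iff.rfl
  -- complex inner products of fixed vectors are real
  have hreal : ∀ x y : E, x ∈ F → y ∈ F →
      (inner ℂ x y : ℂ) = ((Complex.re (inner ℂ x y : ℂ) : ℂ)) := by
    intro x y hx hy
    have h1 : (inner ℂ x y : ℂ) = starRingEnd ℂ (inner ℂ x y : ℂ) := by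
      have := hsym x y
      rw [(hmemF x).1 hx, (hmemF y).1 hy] at this
      exact this.trans (inner_conj_symm (𝕜 := ℂ) _ _).symm
    exact (Complex.conj_eq_iff_re.mp h1.symm).symm
  haveI : FiniteDimensional ℝ F := by
    haveI : FiniteDimensional ℝ E := FiniteDimensional.trans ℝ ℂ E 
    infer_instance
  set n := Module.finrank ℝ F with hn
  set b0 : OrthonormalBasis (Fin n) ℝ F := stdOrthonormalBasis ℝ F with hb0
  set v : Fin n → E := fun j => (b0 j : E) with hv
  have hvF : ∀ j, v j ∈ F := fun j => (b0 j).2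
  -- the family is complex-orthonormal
  have hon : Orthonormal ℂ v := by
    rw [orthonormal_iff_ite]
    intro i j
    have h0 := (orthonormal_iff_ite.mp b0.orthonormal) i j
    have hcoe : (inner ℝ (b0 i) (b0 j) : ℝ) = Complex.re (inner ℂ (v i) (v j) : ℂ) := by
      rw [Submodule.coe_inner]
      exact real_inner_eq_re_inner ℂ (v i) (v j)
    rw [hreal (v i) (v j) (hvF i) (hvF j), ← hcoe, h0]
    split <;> simp
  -- the family spans E over ℂ
  have hsp : ⊤ ≤ Submodule.span ℂ (Set.range v) := by
    intro z _
    have hx : (2⁻¹ : ℂ) • (z + f z) ∈ F := by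
      rw [hmemF, map_smulₛₗ, map_add, hff]
      rw [show starRingEnd ℂ (2⁻¹ : ℂ) = (2⁻¹ : ℂ) by simp [Complex.ext_iff]]
      rw [add_comm]
    have hy : ((-Complex.I) * 2⁻¹) • (z - f z) ∈ F := by
      rw [hmemF, map_smulₛₗ, map_sub, hff]
      rw [show starRingEnd ℂ (-Complex.I * 2⁻¹) = Complex.I * 2⁻¹ by
        simp [Complex.ext_iff]]
      rw [show (Complex.I * 2⁻¹) • (f z - z) = (-Complex.I * 2⁻¹) • (z - f z) by
        rw [← neg_sub z (f z)]; rw [smul_neg, ← neg_smul]; ring_nf]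
    have hz : z = ((2⁻¹ : ℂ) • (z + f z)) + Complex.I • (((-Complex.I) * 2⁻¹) • (z - f z)) := by
      rw [smul_smul]
      rw [show Complex.I * (-Complex.I * 2⁻¹) = (2⁻¹ : ℂ) by
        rw [show Complex.I * (-Complex.I * 2⁻¹) = -(Complex.I*Complex.I) * 2⁻¹ by ring,
          Complex.I_mul_I]; norm_num]
      rw [← smul_add]
      rw [show z + f z + (z - f z) = (2 : ℂ) • z by
        rw [two_smul]; abel]
      rw [smul_smul]
      norm_num
    have hFle : ∀ w : E, w ∈ F → w ∈ Submodule.span ℂ (Set.range v) := by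
      intro w hw
      have h1 : (⟨w, hw⟩ : F) ∈ Submodule.span ℝ (Set.range b0) := by
        rw [← b0.coe_toBasis, b0.toBasis.span_eq]; trivial
      have h2 : w ∈ Submodule.span ℝ (Set.range v) := by
        have := Submodule.mem_map_of_mem (f := F.subtype) h1
        rw [← Submodule.span_image] at this
        convert this using 2
        rw [hv]
        ext x
        simp [Set.range_comp]
        rfl
      exact Submodule.span_le_restrictScalars ℝ ℂ (Set.range v) h2
    rw [hz]
    exact Submodule.add_mem _ (hFle _ hx) (Submodule.smul_mem _ _ (hFle _ hy))
  set b1 : OrthonormalBasis (Fin n) ℂ E := OrthonormalBasis.mk hon hsp with hb1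
  have hdim : n = Module.finrank ℂ E := by
    rw [Module.finrank_eq_card_basis b1.toBasis, Fintype.card_fin]
  refine ⟨b1.reindex (finCongr hdim), fun j => ?_⟩
  have : b1.reindex (finCongr hdim) j = v ((finCongr hdim).symm j) := by
    rw [OrthonormalBasis.reindex_apply, hb1, OrthonormalBasis.coe_mk]
  rw [this]
  exact (hmemF _).1 (hvF _)
end

section
/- Let Z be a complex Hilbert space and T = L + A a symplectomorphism of Z, with L continuous ℂ-linear, self-adjoint and nonnegative, and A continuous conjugate-linear. Then L and A commute (L∘A = A∘L), and A is self-adjoint in the sense that ⟨z₁, A z₂⟩ = ⟨z₂, A z₁⟩ for all z₁, z₂ ∈ Z. -/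
open scoped InnerProductSpace ComplexConjugate

/-- If `a` is selfadjoint and commutes with `b`, then `cfc f a` commutes with `b`. -/
lemma stmt6_commute_cfc {Z : Type*} [NormedAddCommGroup Z] [InnerProductSpace ℂ Z]
    [CompleteSpace Z] (a b : Z →L[ℂ] Z) (hcomm : Commute a b) (f : ℝ → ℝ) :
    Commute (cfc f a) b := by
  refine cfc_cases (fun x => Commute x b) a f (Commute.zero_left b) fun hf ha' => ?_
  suffices H : ∀ g : C(spectrum ℝ a, ℝ), Commute (cfcHom ha' g) b from H _
  let S : Subalgebra ℝ C(spectrum ℝ a, ℝ) :=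
    (Subalgebra.centralizer ℝ {b}).comap (cfcHom ha' (R := ℝ)).toAlgHom
  have hmem : ∀ g : C(spectrum ℝ a, ℝ), g ∈ S ↔ Commute (cfcHom ha' g) b := by
    intro g
    rw [Subalgebra.mem_comap, Subalgebra.mem_centralizer_iff]
    constructor
    · intro hg; exact (hg b rfl).symm
    · intro hg x hx; subst hx; exact hg.symm
  have hclosed : IsClosed (S : Set C(spectrum ℝ a, ℝ)) := by
    have : (S : Set C(spectrum ℝ a, ℝ)) =
        {g | cfcHom ha' g * b = b * cfcHom ha' g} := by
      ext g
      simp only [Set.mem_setOf_eq, SetLike.mem_coe, hmem g]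
      exact ⟨fun h => h.eq, fun h => h⟩
    rw [this]
    exact isClosed_eq
      ((continuous_mul_right b).comp (cfcHom_isClosedEmbedding ha' (R := ℝ)).continuous)
      ((continuous_mul_left b).comp (cfcHom_isClosedEmbedding ha' (R := ℝ)).continuous)
  have hsep : S.SeparatesPoints := by
    intro x y hxy
    refine ⟨_, ⟨(ContinuousMap.id ℝ).restrict (spectrum ℝ a), ?_, rfl⟩, ?_⟩
    · rw [SetLike.mem_coe, hmem]
      rw [cfcHom_id ha']
      exact hcomm
    · simpa [ContinuousMap.restrict] using fun h => hxy (Subtype.ext h)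
  have htop : S = ⊤ := by
    have h1 := ContinuousMap.subalgebra_topologicalClosure_eq_top_of_separatesPoints S hsep
    rw [← h1]
    refine le_antisymm (Subalgebra.le_topologicalClosure S) fun x hx => ?_
    have : x ∈ closure (S : Set C(spectrum ℝ a, ℝ)) := hx
    rwa [hclosed.closure_eq] at this
  intro g
  exact (hmem g).mp (htop ▸ Algebra.mem_top)

/-- If `T = L + A` is a symplectomorphism of the complex Hilbert space `Z`,
with `L` continuous `ℂ`-linear, self-adjoint and nonnegative, and `A` continuous
conjugate-linear, then `L` and `A` commute and `A` is self-adjoint in the sense that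
`⟨z₁, A z₂⟩ = ⟨z₂, A z₁⟩`. -/
theorem stmt_6 {Z : Type*} [NormedAddCommGroup Z] [InnerProductSpace ℂ Z] [CompleteSpace Z]
    (T : Z ≃L[ℝ] Z) (L : Z →L[ℂ] Z) (A : Z →SL[starRingEnd ℂ] Z)
    (hT : ∀ z : Z, T z = L z + A z)
    (hsymp : ∀ z₁ z₂ : Z, (inner ℂ (T z₁) (T z₂) : ℂ).im = (inner ℂ z₁ z₂ : ℂ).im)
    (hLsa : IsSelfAdjoint L) (hLpos : ∀ z : Z, 0 ≤ (inner ℂ z (L z) : ℂ).re) :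
    (∀ z : Z, L (A z) = A (L z)) ∧
    (∀ z₁ z₂ : Z, (inner ℂ z₁ (A z₂) : ℂ) = (inner ℂ z₂ (A z₁) : ℂ)) := by
  classical
  -- the conjugate-linear adjoint of `A`
  set Ad : Z →SL[starRingEnd ℂ] Z :=
    ((InnerProductSpace.toDual ℂ Z).symm.toLinearIsometry.toContinuousLinearMap).comp
      (((innerSL ℂ).comp A).flip) with hAd_def
  have hdag : ∀ w z : Z, ⟪Ad w, z⟫_ℂ = ⟪A z, w⟫_ℂ := by
    intro w z
    simp [hAd_def, InnerProductSpace.toDual_symm_apply]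
  have hdag2 : ∀ w z : Z, ⟪z, Ad w⟫_ℂ = ⟪w, A z⟫_ℂ := by
    intro w z
    rw [← inner_conj_symm, hdag, inner_conj_symm]
  have hLsym : ∀ x y : Z, ⟪L x, y⟫_ℂ = ⟪x, L y⟫_ℂ :=
    fun x y => ContinuousLinearMap.isSelfAdjoint_iff_isSymmetric.mp hLsa x y
  -- step 1: extract the two key identities from the symplectic condition
  have hTi : ∀ z : Z, T (Complex.I • z) = Complex.I • L z - Complex.I • A z := by
    intro z
    rw [hT, map_smul, A.map_smulₛₗ, Complex.conj_I, neg_smul]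
    abel
  have key : ∀ z₁ z₂ : Z, ⟪L z₁, A z₂⟫_ℂ = ⟪L z₂, A z₁⟫_ℂ ∧
      ⟪L z₁, L z₂⟫_ℂ - ⟪A z₂, A z₁⟫_ℂ = ⟪z₁, z₂⟫_ℂ := by
    intro z₁ z₂
    have h1 := hsymp z₁ z₂
    have h2 := hsymp (Complex.I • z₁) (Complex.I • z₂)
    have h3 := hsymp (Complex.I • z₁) z₂
    have h4 := hsymp z₁ (Complex.I • z₂)
    rw [hT z₁, hT z₂] at h1
    rw [hTi, hTi] at h2
    rw [hTi, hT] at h3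
    rw [hT, hTi] at h4
    simp only [inner_add_left, inner_add_right, inner_sub_left, inner_sub_right,
      inner_smul_left, inner_smul_right, Complex.conj_I, Complex.add_im, Complex.sub_im,
      Complex.mul_im, Complex.add_re, Complex.sub_re, Complex.neg_re, Complex.neg_im,
      Complex.I_re, Complex.I_im, Complex.mul_re, neg_mul, zero_mul, one_mul, mul_zero,
      mul_one, zero_sub, sub_zero, zero_add, add_zero, neg_neg, neg_zero] at h1 h2 h3 h4
    have hconj : ∀ x y : Z, ⟪x, y⟫_ℂ = conj ⟪y, x⟫_ℂ := fun x y =>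
      (inner_conj_symm x y).symm
    constructor
    · rw [hconj (L z₂) (A z₁)]
      apply Complex.ext
      · simp only [Complex.conj_re]; linarith
      · simp only [Complex.conj_im]; linarith
    · rw [hconj (A z₂) (A z₁)]
      apply Complex.ext
      · simp only [Complex.sub_re, Complex.conj_re]; linarith
      · simp only [Complex.sub_im, Complex.conj_im]; linarith
  have hI : ∀ z₁ z₂ : Z, ⟪L z₁, A z₂⟫_ℂ = ⟪L z₂, A z₁⟫_ℂ := fun z₁ z₂ => (key z₁ z₂).1
  have hII : ∀ z₁ z₂ : Z, ⟪L z₁, L z₂⟫_ℂ - ⟪A z₂, A z₁⟫_ℂ = ⟪z₁, z₂⟫_ℂ :=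
    fun z₁ z₂ => (key z₁ z₂).2
  -- step 2: operator identities
  have h3a : ∀ w : Z, L (A w) = Ad (L w) := by
    intro w
    refine ext_inner_left ℂ fun v => ?_
    rw [hdag2, ← hLsym, hI]
  have h3b : ∀ w : Z, L (L w) = w + Ad (A w) := by
    intro w
    refine ext_inner_left ℂ fun v => ?_
    rw [inner_add_right, hdag2, ← hLsym]
    have := hII v w
    rw [sub_eq_iff_eq_add] at this
    rw [this]
  -- step 3: invertibility of T gives the remaining identity
  have hST : ∀ z : Z, L (T z) - Ad (T z) = z := by
    intro z
    rw [hT, map_add, map_add, h3b z, h3a z]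
    abel
  have hTS : ∀ z : Z, T (L z - Ad z) = z := by
    intro z
    have h := hST (T.symm z)
    rw [T.apply_symm_apply] at h
    rw [h, T.apply_symm_apply]
  have hexp : ∀ z : Z, A (L z) - L (Ad z) = A (Ad z) - Ad (A z) := by
    intro z
    have h := hTS z
    rw [hT, map_sub, map_sub, h3b z] at h
    rw [← sub_eq_zero]
    have h' : (A (L z) - L (Ad z)) - (A (Ad z) - Ad (A z)) =
        z + Ad (A z) - L (Ad z) + (A (L z) - A (Ad z)) - z := by abel
    rw [h', h, sub_self]
  have h5a : ∀ z : Z, A (L z) = L (Ad z) := by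
    intro z
    have e1 := hexp z
    have e2 := hexp (Complex.I • z)
    simp only [map_smul, map_smulₛₗ, Complex.conj_I, smul_neg, neg_smul, neg_neg,
      map_neg] at e2
    have e3 : (2 * Complex.I) • (A (L z) - L (Ad z)) =
        Complex.I • (A (L z) - L (Ad z)) + Complex.I • (A (Ad z) - Ad (A z)) := by
      rw [← e1]; module
    have e4 : (2 * Complex.I) • (A (L z) - L (Ad z)) = 0 := by
      rw [e3]
      calc Complex.I • (A (L z) - L (Ad z)) + Complex.I • (A (Ad z) - Ad (A z))
          = -(-(Complex.I • A (L z)) - -(Complex.I • L (Ad z)) -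
              (Complex.I • A (Ad z) - Complex.I • Ad (A z))) := by module
        _ = 0 := by rw [e2]; simp
    have e5 : A (L z) - L (Ad z) = 0 := by
      rcases smul_eq_zero.mp e4 with h | h
      · exact absurd (by simpa [Complex.I_ne_zero] using h) two_ne_zero
      · exact h
    rw [← sub_eq_zero]
    exact e5
  -- step 4: D := A - Ad, N := -(D ∘ D)
  set Dc : Z →SL[starRingEnd ℂ] Z := A - Ad with hDc_def
  have hDc_apply : ∀ z : Z, Dc z = A z - Ad z := fun z => rfl
  set N : Z →L[ℂ] Z := -(Dc.comp Dc) with hN_def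
  have hN_apply : ∀ z : Z, N z = -Dc (Dc z) := fun z => rfl
  have hskew : ∀ w v : Z, ⟪w, Dc v⟫_ℂ = -⟪v, Dc w⟫_ℂ := by
    intro w v
    rw [hDc_apply, hDc_apply, inner_sub_right, inner_sub_right, hdag2, hdag2]
    ring
  have hLD : ∀ z : Z, L (Dc z) = -Dc (L z) := by
    intro z
    rw [hDc_apply z, map_sub, h3a z, ← h5a z, hDc_apply (L z)]
    abel
  have hNL : Commute N L := by
    show N * L = L * N
    ext z
    simp only [ContinuousLinearMap.mul_apply]
    rw [hN_apply (L z), hN_apply z, map_neg, hLD (Dc z), neg_neg, hLD z, map_neg]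
  have hN_sym : ∀ x y : Z, ⟪N x, y⟫_ℂ = ⟪x, N y⟫_ℂ := by
    intro x y
    have hx : ⟪x, N y⟫_ℂ = ⟪Dc y, Dc x⟫_ℂ := by
      rw [hN_apply, inner_neg_right, hskew x (Dc y), neg_neg]
    have hy : ⟪y, N x⟫_ℂ = ⟪Dc x, Dc y⟫_ℂ := by
      rw [hN_apply, inner_neg_right, hskew y (Dc x), neg_neg]
    calc ⟪N x, y⟫_ℂ = conj ⟪y, N x⟫_ℂ := (inner_conj_symm _ _).symm
    _ = conj ⟪Dc x, Dc y⟫_ℂ := by rw [hy]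
    _ = ⟪Dc y, Dc x⟫_ℂ := inner_conj_symm _ _
    _ = ⟪x, N y⟫_ℂ := hx.symm
  have hN_inner : ∀ z : Z, ⟪z, N z⟫_ℂ = ⟪Dc z, Dc z⟫_ℂ := by
    intro z
    rw [hN_apply, inner_neg_right, hskew z (Dc z), neg_neg]
  have hN_sa : IsSelfAdjoint N :=
    ContinuousLinearMap.isSelfAdjoint_iff_isSymmetric.mpr fun x y => hN_sym x y
  have hN_nonneg : (0 : Z →L[ℂ] Z) ≤ N := by
    rw [ContinuousLinearMap.nonneg_iff_isPositive]
    refine ⟨fun x y => hN_sym x y, fun x => ?_⟩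
    rw [ContinuousLinearMap.reApplyInnerSelf_apply]
    have h := hN_sym x x
    rw [hN_inner x] at h
    have h0 : (0:ℝ) ≤ RCLike.re ⟪Dc x, Dc x⟫_ℂ := inner_self_nonneg
    rw [RCLike.re_to_complex] at h0
    calc (0:ℝ) ≤ (⟪Dc x, Dc x⟫_ℂ).re := h0
    _ = (⟪N x, x⟫_ℂ).re := by rw [h]
  have hspec : ∀ x ∈ spectrum ℝ N, (0:ℝ) ≤ x := spectrum_nonneg_of_nonneg hN_nonneg
  set F : Z →L[ℂ] Z := cfc Real.sqrt N with hF_def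
  have hF_sa : IsSelfAdjoint F := cfc_predicate Real.sqrt N
  have hF_sym : ∀ x y : Z, ⟪F x, y⟫_ℂ = ⟪x, F y⟫_ℂ :=
    fun x y => ContinuousLinearMap.isSelfAdjoint_iff_isSymmetric.mp hF_sa x y
  have hFF : F * F = N := by
    rw [hF_def, ← cfc_mul Real.sqrt Real.sqrt N]
    have h : cfc (fun x => Real.sqrt x * Real.sqrt x) N = cfc (id : ℝ → ℝ) N :=
      cfc_congr fun x hx => Real.mul_self_sqrt (hspec x hx)
    rw [h, cfc_id ℝ N]
  have hFL : Commute F L := stmt6_commute_cfc N L hNL Real.sqrt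
  have hre0 : ∀ z : Z, (⟪L z, N z⟫_ℂ).re = 0 := by
    intro z
    have hup : (⟪L z, N z⟫_ℂ).re ≤ 0 := by
      have h0 := hLpos (Dc z)
      have h1 : ⟪Dc z, L (Dc z)⟫_ℂ = -⟪L z, N z⟫_ℂ := by
        rw [hLD z, inner_neg_right, hskew (Dc z) (L z), hN_apply, inner_neg_right]
      rw [h1, Complex.neg_re] at h0
      linarith
    have hdown : 0 ≤ (⟪L z, N z⟫_ℂ).re := by
      have hNz : N z = F (F z) := by
        rw [← hFF]; rfl
      have hcomm : F (L z) = L (F z) := by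
        have h := DFunLike.congr_fun hFL.eq z
        simpa only [ContinuousLinearMap.mul_apply] using h
      have h2 : ⟪L z, N z⟫_ℂ = conj ⟪F z, L (F z)⟫_ℂ := by
        rw [hNz, ← hF_sym (L z) (F z), hcomm, ← inner_conj_symm]
      rw [h2, Complex.conj_re]
      exact hLpos (F z)
    linarith
  have hLNsym : ∀ x y : Z, ⟪L (N x), y⟫_ℂ = ⟪x, L (N y)⟫_ℂ := by
    intro x y
    rw [hLsym (N x) y, hN_sym x (L y)]
    congr 1
    have h := DFunLike.congr_fun hNL.eq y
    simpa only [ContinuousLinearMap.mul_apply] using h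
  have hLN0 : ∀ z : Z, L (N z) = 0 := by
    have him : ∀ x : Z, ⟪(L.comp N) x, x⟫_ℂ = 0 := by
      intro x
      have hval : ⟪(L.comp N) x, x⟫_ℂ = ⟪L (N x), x⟫_ℂ := rfl
      rw [hval]
      have hreal : conj (⟪L (N x), x⟫_ℂ) = ⟪L (N x), x⟫_ℂ := by
        rw [inner_conj_symm, hLNsym x x]
      have hre : (⟪L (N x), x⟫_ℂ).re = 0 := by
        rw [hLNsym x x, ← hLsym]
        exact hre0 x
      apply Complex.ext
      · exact hre
      · have := congrArg Complex.im hreal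
        simp only [Complex.conj_im] at this
        simp only [Complex.zero_im]
        linarith
    have h0 : ((L.comp N : Z →L[ℂ] Z) : Z →ₗ[ℂ] Z) = 0 :=
      (inner_map_self_eq_zero _).mp fun x => him x
    intro z
    have := DFunLike.congr_fun h0 z
    simpa using this
  have hN0 : ∀ z : Z, N z = 0 := by
    intro z
    have h := hII (N z) (N z)
    rw [hLN0 z, inner_zero_left, zero_sub] at h
    have hre := congrArg Complex.re h
    simp only [Complex.neg_re] at hre
    have h1 : (0:ℝ) ≤ (⟪A (N z), A (N z)⟫_ℂ).re := by
      have := inner_self_nonneg (𝕜 := ℂ) (x := A (N z))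
      rwa [RCLike.re_to_complex] at this
    have h2 : (0:ℝ) ≤ (⟪N z, N z⟫_ℂ).re := by
      have := inner_self_nonneg (𝕜 := ℂ) (x := N z)
      rwa [RCLike.re_to_complex] at this
    have h3 : (⟪N z, N z⟫_ℂ).re = 0 := by linarith
    have h4 : ⟪N z, N z⟫_ℂ = 0 := by
      apply Complex.ext
      · exact h3
      · have := inner_self_im (𝕜 := ℂ) (x := N z)
        rw [RCLike.im_to_complex] at this
        simpa using this
    exact inner_self_eq_zero.mp h4
  have hD0 : ∀ z : Z, A z = Ad z := by
    intro z
    have h := hN_inner z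
    rw [hN0 z, inner_zero_right] at h
    have := inner_self_eq_zero.mp h.symm
    rwa [hDc_apply, sub_eq_zero] at this
  constructor
  · intro z
    rw [h3a z, ← hD0 (L z)]
  · intro z₁ z₂
    rw [hD0 z₂, hdag2]
end

section
/- Let Z be a complex Hilbert space, B a continuous ℂ-linear operator on Z which is self-adjoint and nonnegative, and A : Z → Z a continuous conjugate-linear map such that A∘B = B∘A. Then A commutes with the nonnegative self-adjoint square root of B: A∘√B = √B∘A. -/
set_option synthInstance.maxHeartbeats 1000000 in
/-- If `B` is a nonnegative self-adjoint continuous operator on a complex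
Hilbert space `Z` and `A` is a continuous conjugate-linear map commuting with `B`, then `A`
commutes with the (unique) nonnegative self-adjoint square root `√B` of `B`. -/
theorem stmt_10 {Z : Type*} [NormedAddCommGroup Z] [InnerProductSpace ℂ Z] [CompleteSpace Z]
    (B : Z →L[ℂ] Z) (hBsa : IsSelfAdjoint B) (hBpos : ∀ z : Z, 0 ≤ (inner ℂ z (B z) : ℂ).re)
    (A : Z →SL[starRingEnd ℂ] Z) (hAB : ∀ z : Z, A (B z) = B (A z)) :
    ∃ S : Z →L[ℂ] Z,
      IsSelfAdjoint S ∧ (∀ z : Z, 0 ≤ (inner ℂ z (S z) : ℂ).re) ∧ S.comp S = B ∧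
      (∀ z : Z, A (S z) = S (A z)) ∧
      ∀ S' : Z →L[ℂ] Z, IsSelfAdjoint S' → (∀ z : Z, 0 ≤ (inner ℂ z (S' z) : ℂ).re) →
        S'.comp S' = B → S' = S := by
  have key : ∀ T : Z →L[ℂ] Z, IsSelfAdjoint T → (∀ z : Z, 0 ≤ (inner ℂ z (T z) : ℂ).re) →
      (0 : Z →L[ℂ] Z) ≤ T := by
    intro T hsa hpos
    rw [ContinuousLinearMap.nonneg_iff_isPositive]
    refine ⟨hsa.isSymmetric, fun x => ?_⟩
    have h1 : (inner ℂ (T x) x : ℂ) = starRingEnd ℂ (inner ℂ x (T x)) := (inner_conj_symm _ _).symm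
    have : ContinuousLinearMap.reApplyInnerSelf T x = (inner ℂ x (T x) : ℂ).re := by
      rw [ContinuousLinearMap.reApplyInnerSelf, h1]
      exact Complex.conj_re _
    rw [this]; exact hpos x
  have keyrev : ∀ T : Z →L[ℂ] Z, (0 : Z →L[ℂ] Z) ≤ T → ∀ z, 0 ≤ (inner ℂ z (T z) : ℂ).re := by
    intro T hT z
    have h := ((ContinuousLinearMap.nonneg_iff_isPositive T).mp hT).2 z
    have h1 : (inner ℂ (T z) z : ℂ) = starRingEnd ℂ (inner ℂ z (T z)) := (inner_conj_symm _ _).symm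
    rw [ContinuousLinearMap.reApplyInnerSelf, h1] at h
    rw [RCLike.conj_re] at h
    exact h
  have hBnn : (0 : Z →L[ℂ] Z) ≤ B := key B hBsa hBpos
  set S := cfc Real.sqrt B with hSdef
  have hSsa : IsSelfAdjoint S := cfc_predicate _ _
  have hSnn : (0 : Z →L[ℂ] Z) ≤ S := cfc_nonneg fun x _ => Real.sqrt_nonneg x
  have hmul : S * S = B := by
    rw [hSdef, ← cfc_mul _ _ B (by fun_prop) (by fun_prop)]
    have h : ∀ x ∈ spectrum ℝ B, Real.sqrt x * Real.sqrt x = x := fun x hx =>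
      Real.mul_self_sqrt (spectrum_nonneg_of_nonneg hBnn hx)
    rw [cfc_congr h, cfc_id' ℝ B]
  -- the commutation
  have hcomm : ∀ z, A (S z) = S (A z) := by
    let M : Subalgebra ℝ C(spectrum ℝ B, ℝ) :=
      { carrier := {g | ∀ z, A (cfcHom hBsa g z) = cfcHom hBsa g (A z)}
        mul_mem' := by
          intro g h hg hh z
          simp only [map_mul, ContinuousLinearMap.mul_apply]
          rw [hg, hh]
        one_mem' := by intro z; simp
        add_mem' := by
          intro g h hg hh z
          simp only [map_add, ContinuousLinearMap.add_apply, map_add]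
          rw [hg, hh]
        zero_mem' := by intro z; simp
        algebraMap_mem' := by
          intro r z
          have h1 : cfcHom hBsa (algebraMap ℝ C(spectrum ℝ B, ℝ) r) =
              algebraMap ℝ (Z →L[ℂ] Z) r := (cfcHom hBsa).commutes r
          rw [h1]
          have h2 : ∀ w : Z, algebraMap ℝ (Z →L[ℂ] Z) r w = ((r : ℂ)) • w := by
            intro w
            simp [Algebra.algebraMap_eq_smul_one, algebraMap_smul]
          rw [h2, h2, A.map_smulₛₗ]
          simp }
    have hφcont : Continuous (cfcHom (R := ℝ) hBsa) :=
      (cfcHom_isClosedEmbedding hBsa).continuous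
    have hMclosed : IsClosed (M : Set C(spectrum ℝ B, ℝ)) := by
      have heq : (M : Set C(spectrum ℝ B, ℝ)) =
          ⋂ z : Z, {g | A (cfcHom hBsa g z) = cfcHom hBsa g (A z)} := by
        ext g; simp only [Set.mem_iInter, Set.mem_setOf_eq]; rfl
      rw [heq]
      refine isClosed_iInter fun z => isClosed_eq ?_ ?_
      · exact A.continuous.comp ((ContinuousLinearMap.apply ℂ Z z).continuous.comp hφcont)
      · exact (ContinuousLinearMap.apply ℂ Z (A z)).continuous.comp hφcont
    have hXmem : (ContinuousMap.restrict (spectrum ℝ B) (ContinuousMap.id ℝ)) ∈ M := by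
      intro z
      rw [cfcHom_id hBsa]
      exact hAB z
    have hsep : M.SeparatesPoints := by
      intro x y hxy
      exact ⟨_, ⟨_, hXmem, rfl⟩, fun h => hxy (Subtype.ext h)⟩
    have hMtc : M.topologicalClosure = M := by
      apply SetLike.ext'
      exact hMclosed.closure_eq
    have hMtop : M = ⊤ := by
      rw [← hMtc]
      exact ContinuousMap.subalgebra_topologicalClosure_eq_top_of_separatesPoints M hsep
    intro z
    have hg : ∀ g : C(spectrum ℝ B, ℝ), A (cfcHom hBsa g z) = cfcHom hBsa g (A z) := by
      intro g
      have hgm : g ∈ M := hMtop.symm ▸ Algebra.mem_top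
      exact hgm z
    rw [hSdef, cfc_apply Real.sqrt B hBsa (by fun_prop)]
    exact hg _
  refine ⟨S, hSsa, keyrev S hSnn, ?_, hcomm, ?_⟩
  · rw [← hmul]; rfl
  · intro S' hsa' hpos' hmul'
    have hmul'' : S' * S' = B := hmul'
    have h1 : CFC.sqrt B = S' := CFC.sqrt_unique hmul'' (key S' hsa' hpos')
    have h2 : CFC.sqrt B = S := CFC.sqrt_unique hmul hSnn
    rw [← h1, h2]
end

section
/- Fix t > 0, n ≥ 1 and m ≥ 0, and let h_t(x) = (πt)^{−n/2} e^{−‖x‖²/t} for x ∈ ℝ^n. The map p ↦ h_t * p, where (h_t * p)(x) = ∫_{ℝ^n} p(x − y) h_t(y) dy, is a linear bijection from the space of polynomial functions ℝ^n → ℂ of total degree at most m onto itself, and for each polynomial p of degree at most m the difference (h_t * p) − p is a polynomial of degree at most m − 2 (in particular the map preserves the top-degree homogeneous part). -/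
open MeasureTheory

noncomputable section

namespace S18
open MvPolynomial
variable {n : ℕ}

def ker (t : ℝ) (s : ℝ) : ℝ := (Real.pi * t) ^ (-(1:ℝ)/2) * Real.exp (-s^2 / t)
def ν (t : ℝ) (j : ℕ) : ℂ := ((∫ s : ℝ, (-s)^j * ker t s) : ℝ)

lemma integrable_pow_ker {t : ℝ} (ht : 0 < t) (j : ℕ) :
    Integrable (fun s : ℝ => s ^ j * ker t s) := by
  have hb : 0 < 1 / t := by positivity
  have h := (integrable_rpow_mul_exp_neg_mul_sq hb (s := (j:ℝ))
    (lt_of_lt_of_le (by norm_num) (Nat.cast_nonneg j))).const_mul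
    ((Real.pi * t) ^ (-(1:ℝ)/2))
  simp_rw [Real.rpow_natCast] at h
  convert h using 2 with s
  unfold ker
  rw [neg_div, ← one_div_mul_eq_div, ← neg_mul]
  ring

lemma integrable_neg_pow_ker {t : ℝ} (ht : 0 < t) (j : ℕ) :
    Integrable (fun s : ℝ => (-s) ^ j * ker t s) := by
  have h := (integrable_pow_ker ht j).const_mul ((-1:ℝ)^j)
  exact h.congr (Filter.Eventually.of_forall fun s => by ring)

lemma nu_zero {t : ℝ} (ht : 0 < t) : ν t 0 = 1 := by
  unfold ν ker
  simp only [pow_zero, one_mul]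
  rw [integral_const_mul]
  have h : ∀ s : ℝ, Real.exp (-s^2/t) = Real.exp (-(1/t) * s^2) := by
    intro s; congr 1; field_simp
  simp_rw [h, integral_gaussian]
  have hpt : 0 < Real.pi * t := by positivity
  rw [show Real.pi / (1/t) = Real.pi * t by field_simp]
  rw [Real.sqrt_eq_rpow, ← Real.rpow_add hpt]
  norm_num

lemma nu_one {t : ℝ} (ht : 0 < t) : ν t 1 = 0 := by
  unfold ν
  have key : (∫ s : ℝ, (-s)^1 * ker t s) = 0 := by
    have h1 := integral_neg_eq_self (fun s : ℝ => (-s)^1 * ker t s) volume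
    have h2 : ∀ s : ℝ, (-(-s) : ℝ)^1 * ker t (-s) = -((-s)^1 * ker t s) := by
      intro s; unfold ker; rw [neg_sq]; ring
    simp_rw [h2, integral_neg] at h1
    linarith
  rw [key]; norm_num

def q (t : ℝ) (n : ℕ) (a : ℕ) (i : Fin n) : MvPolynomial (Fin n) ℂ :=
  ∑ j ∈ Finset.range (a+1), C ((a.choose j : ℂ) * ν t (a - j)) * (X i)^j

def r (t : ℝ) (n : ℕ) (a : ℕ) (i : Fin n) : MvPolynomial (Fin n) ℂ :=
  ∑ j ∈ Finset.range a, C ((a.choose j : ℂ) * ν t (a - j)) * (X i)^j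

lemma q_eq {t : ℝ} (ht : 0 < t) (a : ℕ) (i : Fin n) :
    q t n a i = X i ^ a + r t n a i := by
  unfold q r
  rw [Finset.sum_range_succ, Nat.choose_self, Nat.sub_self, nu_zero ht]
  push_cast
  rw [mul_one, map_one, one_mul, add_comm]

lemma q_zero {t : ℝ} (ht : 0 < t) (i : Fin n) : q t n 0 i = 1 := by
  unfold q
  simp [nu_zero ht]

lemma deg_r {t : ℝ} (ht : 0 < t) (a : ℕ) (i : Fin n) :
    (r t n a i).totalDegree ≤ a - 2 := by
  refine (totalDegree_finset_sum _ _).trans (Finset.sup_le fun j hj => ?_)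
  have hja : j < a := Finset.mem_range.mp hj
  rcases eq_or_ne j (a-1) with h|h
  · have h1 : a - j = 1 := by omega
    rw [h1, nu_one ht, mul_zero, map_zero, zero_mul, totalDegree_zero]
    exact Nat.zero_le _
  · have hj2 : j ≤ a - 2 := by omega
    refine le_trans (totalDegree_mul _ _) ?_
    rw [totalDegree_C, zero_add, totalDegree_X_pow]
    exact hj2

lemma deg_q (t : ℝ) (a : ℕ) (i : Fin n) : (q t n a i).totalDegree ≤ a := by
  refine (totalDegree_finset_sum _ _).trans (Finset.sup_le fun j hj => ?_)
  refine le_trans (totalDegree_mul _ _) ?_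
  rw [totalDegree_C, zero_add, totalDegree_X_pow]
  exact Nat.lt_succ_iff.mp (Finset.mem_range.mp hj)

lemma eval_q (t : ℝ) (a : ℕ) (i : Fin n) (z : Fin n → ℂ) :
    eval z (q t n a i) = ∑ j ∈ Finset.range (a+1), (a.choose j : ℂ) * ν t (a-j) * (z i)^j := by
  simp [q]

def P (t : ℝ) (n : ℕ) (a : Fin n →₀ ℕ) : MvPolynomial (Fin n) ℂ :=
  ∏ i, q t n (a i) i

lemma P_zero {t : ℝ} (ht : 0 < t) : P t n 0 = 1 := by
  unfold P
  simp [q_zero ht]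

def T (t : ℝ) (n : ℕ) : MvPolynomial (Fin n) ℂ →ₗ[ℂ] MvPolynomial (Fin n) ℂ :=
  (basisMonomials (Fin n) ℂ).constr ℂ (fun a => P t n a)

lemma T_monomial (t : ℝ) (a : Fin n →₀ ℕ) : T t n (monomial a 1) = P t n a := by
  have h : (monomial a (1:ℂ)) = basisMonomials (Fin n) ℂ a := by
    rw [coe_basisMonomials]
  rw [h, T, Module.Basis.constr_basis]

lemma T_apply (t : ℝ) (p : MvPolynomial (Fin n) ℂ) :
    T t n p = ∑ a ∈ p.support, coeff a p • P t n a := by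
  conv_lhs => rw [p.as_sum]
  rw [map_sum]
  refine Finset.sum_congr rfl fun a ha => ?_
  rw [show (monomial a (coeff a p)) = coeff a p • monomial a (1:ℂ) by
    rw [smul_monomial, smul_eq_mul, mul_one], LinearMap.map_smul, T_monomial]

lemma eval_T (t : ℝ) (p : MvPolynomial (Fin n) ℂ) (z : Fin n → ℂ) :
    eval z (T t n p) = ∑ a ∈ p.support, coeff a p * ∏ i, eval z (q t n (a i) i) := by
  rw [T_apply, map_sum]
  refine Finset.sum_congr rfl fun a ha => ?_
  rw [smul_eval, P, map_prod]

/-! ### 1D integrals -/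

lemma key_pointwise (t : ℝ) (x0 : ℝ) (a : ℕ) (s : ℝ) :
    ((x0 - s : ℝ) : ℂ)^a * ((ker t s : ℝ) : ℂ)
      = ∑ j ∈ Finset.range (a+1),
          ((x0:ℂ)^j * (a.choose j : ℂ)) * ((((-s)^(a-j) * ker t s : ℝ)) : ℂ) := by
  have h : ((x0 - s : ℝ) : ℂ) = (x0:ℂ) + ((-s : ℝ):ℂ) := by push_cast; ring
  rw [h, add_pow, Finset.sum_mul]
  refine Finset.sum_congr rfl fun j hj => ?_
  push_cast
  ring

lemma integrable_sub_pow_ker {t : ℝ} (ht : 0 < t) (x0 : ℝ) (a : ℕ) :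
    Integrable (fun s : ℝ => ((x0 - s : ℝ) : ℂ)^a * ((ker t s : ℝ) : ℂ)) := by
  have h : (fun s : ℝ => ((x0 - s : ℝ) : ℂ)^a * ((ker t s : ℝ) : ℂ))
      = fun s => ∑ j ∈ Finset.range (a+1),
          ((x0:ℂ)^j * (a.choose j : ℂ)) * ((((-s)^(a-j) * ker t s : ℝ)) : ℂ) :=
    funext (key_pointwise t x0 a)
  rw [h]
  exact integrable_finset_sum _ fun j hj =>
    ((integrable_neg_pow_ker ht (a-j)).ofReal).const_mul _

lemma int1D {t : ℝ} (ht : 0 < t) (x0 : ℝ) (a : ℕ) :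
    (∫ s : ℝ, ((x0 - s : ℝ) : ℂ)^a * ((ker t s : ℝ) : ℂ))
      = ∑ j ∈ Finset.range (a+1), (a.choose j : ℂ) * ν t (a-j) * (x0:ℂ)^j := by
  simp_rw [key_pointwise t x0 a]
  rw [integral_finset_sum (Finset.range (a+1))
    (f := fun j (s:ℝ) => ((x0:ℂ)^j * (a.choose j : ℂ)) * ((((-s)^(a-j) * ker t s : ℝ)) : ℂ))
    (fun j hj => ((integrable_neg_pow_ker ht (a-j)).ofReal).const_mul _)]
  refine Finset.sum_congr rfl fun j hj => ?_
  rw [integral_const_mul]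
  have h : (∫ s : ℝ, ((((-s)^(a-j) * ker t s : ℝ)) : ℂ))
      = ((∫ s : ℝ, (-s)^(a-j) * ker t s : ℝ) : ℂ) := integral_ofReal
  rw [h]
  unfold ν
  ring

/-! ### main integral identity -/

lemma main_integral {t : ℝ} (ht : 0 < t) (p : MvPolynomial (Fin n) ℂ) (x : Fin n → ℝ) :
    (∫ y : Fin n → ℝ, eval (fun i => ((x i - y i : ℝ):ℂ)) p * ((∏ i, ker t (y i) : ℝ) : ℂ))
      = eval (fun i => ((x i : ℝ):ℂ)) (T t n p) := by
  have step1 : ∀ y : Fin n → ℝ,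
      eval (fun i => ((x i - y i : ℝ):ℂ)) p * ((∏ i, ker t (y i) : ℝ) : ℂ)
        = ∑ d ∈ p.support, coeff d p *
            ∏ i, (((x i - y i : ℝ):ℂ)^(d i) * ((ker t (y i) : ℝ):ℂ)) := by
    intro y
    rw [eval_eq', Finset.sum_mul]
    refine Finset.sum_congr rfl fun d hd => ?_
    rw [Complex.ofReal_prod, mul_assoc, ← Finset.prod_mul_distrib]
  simp_rw [step1]
  rw [integral_finset_sum (μ := volume) p.support
    (f := fun d (y : Fin n → ℝ) => coeff d p *
      ∏ i, (((x i - y i : ℝ):ℂ)^(d i) * ((ker t (y i) : ℝ):ℂ)))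
    (fun d hd => (Integrable.fintype_prod
      (f := fun i (s : ℝ) => ((x i - s : ℝ):ℂ)^(d i) * ((ker t s : ℝ):ℂ))
      (fun i => integrable_sub_pow_ker ht (x i) (d i))).const_mul _)]
  rw [eval_T]
  refine Finset.sum_congr rfl fun d hd => ?_
  rw [integral_const_mul]
  congr 1
  rw [integral_fintype_prod_volume_eq_prod (ι := Fin n)
    (f := fun i (s : ℝ) => ((x i - s : ℝ):ℂ)^(d i) * ((ker t s : ℝ):ℂ))]
  refine Finset.prod_congr rfl fun i _ => ?_
  rw [int1D ht (x i) (d i), eval_q]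

lemma ker_prod {t : ℝ} (ht : 0 < t) (y : Fin n → ℝ) :
    (Real.pi * t) ^ (-(n:ℝ)/2) * Real.exp (-(∑ i, y i ^ 2)/t) = ∏ i, ker t (y i) := by
  unfold ker
  rw [Finset.prod_mul_distrib, Finset.prod_const, ← Real.exp_sum]
  congr 1
  · rw [← Real.rpow_natCast ((Real.pi*t) ^ (-(1:ℝ)/2)) (Finset.univ.card),
      ← Real.rpow_mul (le_of_lt (by positivity))]
    congr 1
    simp [Finset.card_univ]
    ring
  · congr 1
    rw [← Finset.sum_neg_distrib, Finset.sum_div]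

/-! ### degrees -/

lemma deg2_add {K : ℕ} {u v : MvPolynomial (Fin n) ℂ}
    (hu : u = 0 ∨ u.totalDegree + 2 ≤ K) (hv : v = 0 ∨ v.totalDegree + 2 ≤ K) :
    u + v = 0 ∨ (u + v).totalDegree + 2 ≤ K := by
  rcases hu with hu|hu <;> rcases hv with hv|hv
  · left; rw [hu, hv, add_zero]
  · right; rwa [hu, zero_add]
  · right; rwa [hv, add_zero]
  · right
    have h := totalDegree_add u v
    rcases max_cases u.totalDegree v.totalDegree with ⟨hm,_⟩|⟨hm,_⟩ <;> omega

lemma prod_add_sub_deg {ι : Type*} (s : Finset ι) (f g : ι → MvPolynomial (Fin n) ℂ)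
    (d : ι → ℕ) (hf : ∀ i ∈ s, (f i).totalDegree ≤ d i)
    (hg : ∀ i ∈ s, g i = 0 ∨ (g i).totalDegree + 2 ≤ d i) :
    (∏ i ∈ s, (f i + g i) - ∏ i ∈ s, f i) = 0 ∨
      (∏ i ∈ s, (f i + g i) - ∏ i ∈ s, f i).totalDegree + 2 ≤ ∑ i ∈ s, d i := by
  classical
  induction s using Finset.induction_on with
  | empty => left; simp
  | @insert a s ha ih =>
    rw [Finset.prod_insert ha, Finset.prod_insert ha, Finset.sum_insert ha]
    have key : (f a + g a) * ∏ i ∈ s, (f i + g i) - f a * ∏ i ∈ s, f i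
        = (f a + g a) * (∏ i ∈ s, (f i + g i) - ∏ i ∈ s, f i) + g a * ∏ i ∈ s, f i := by
      ring
    rw [key]
    have hmem : a ∈ insert a s := Finset.mem_insert_self a s
    have h1 : (f a + g a).totalDegree ≤ d a := by
      refine (totalDegree_add _ _).trans (max_le (hf a hmem) ?_)
      rcases hg a hmem with h|h
      · rw [h, totalDegree_zero]; exact Nat.zero_le _
      · omega
    have h2 := ih (fun i hi => hf i (Finset.mem_insert_of_mem hi))
      (fun i hi => hg i (Finset.mem_insert_of_mem hi))
    have h3 : (∏ i ∈ s, f i).totalDegree ≤ ∑ i ∈ s, d i :=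
      (totalDegree_finset_prod _ _).trans
        (Finset.sum_le_sum fun i hi => hf i (Finset.mem_insert_of_mem hi))
    apply deg2_add
    · rcases h2 with h2|h2
      · left; rw [h2, mul_zero]
      · right
        have h4 := totalDegree_mul (f a + g a) (∏ i ∈ s, (f i + g i) - ∏ i ∈ s, f i)
        omega
    · rcases hg a hmem with hga|hga
      · left; rw [hga, zero_mul]
      · right
        have h4 := totalDegree_mul (g a) (∏ i ∈ s, f i)
        omega

lemma r_cases {t : ℝ} (ht : 0 < t) (a : ℕ) (i : Fin n) :
    r t n a i = 0 ∨ (r t n a i).totalDegree + 2 ≤ a := by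
  match a with
  | 0 => left; unfold r; simp
  | 1 =>
    left; unfold r
    simp [nu_one ht]
  | (k+2) =>
    right
    have h := deg_r ht (k+2) i
    omega

lemma monomial_one_eq (a : Fin n →₀ ℕ) :
    (monomial a (1:ℂ)) = ∏ i, X i ^ a i := by
  rw [← prod_X_pow_eq_monomial]
  refine Finset.prod_subset (Finset.subset_univ _) fun i _ hi => ?_
  rw [Finsupp.notMem_support_iff.mp hi, pow_zero]

lemma P_sub_monomial {t : ℝ} (ht : 0 < t) (a : Fin n →₀ ℕ) :
    (P t n a - monomial a 1).totalDegree ≤ (∑ i, a i) - 2 := by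
  rw [monomial_one_eq]
  unfold P
  simp_rw [q_eq ht]
  have h := prod_add_sub_deg Finset.univ (fun i => X i ^ a i) (fun i => r t n (a i) i)
    (fun i => a i) (fun i _ => le_of_eq (totalDegree_X_pow i (a i)))
    (fun i _ => r_cases ht (a i) i)
  beta_reduce at h
  rcases h with h|h
  · rw [h, totalDegree_zero]; exact Nat.zero_le _
  · omega

lemma sum_eq_finsupp_sum (a : Fin n →₀ ℕ) : (∑ i, a i) = a.sum fun _ e => e := by
  rw [Finsupp.sum_fintype]
  exact fun _ => rfl

lemma deg_T_le (t : ℝ) (p : MvPolynomial (Fin n) ℂ) :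
    (T t n p).totalDegree ≤ p.totalDegree := by
  rw [T_apply]
  refine (totalDegree_finset_sum _ _).trans (Finset.sup_le fun a ha => ?_)
  refine (totalDegree_smul_le _ _).trans ?_
  refine (totalDegree_finset_prod _ _).trans ?_
  calc ∑ i, (q t n (a i) i).totalDegree ≤ ∑ i, a i :=
        Finset.sum_le_sum fun i _ => deg_q t (a i) i
    _ ≤ p.totalDegree := by rw [sum_eq_finsupp_sum]; exact le_totalDegree ha

lemma deg_T_sub {t : ℝ} (ht : 0 < t) (p : MvPolynomial (Fin n) ℂ) :
    (T t n p - p).totalDegree ≤ p.totalDegree - 2 := by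
  have hp : T t n p - p = ∑ a ∈ p.support, coeff a p • (P t n a - monomial a 1) := by
    calc T t n p - p
        = (∑ a ∈ p.support, coeff a p • P t n a) - ∑ a ∈ p.support, monomial a (coeff a p) := by
          rw [T_apply]; congr 1; exact p.as_sum
      _ = ∑ a ∈ p.support, coeff a p • (P t n a - monomial a 1) := by
          rw [← Finset.sum_sub_distrib]
          refine Finset.sum_congr rfl fun a ha => ?_
          rw [smul_sub, smul_monomial, smul_eq_mul, mul_one]
  rw [hp]
  refine (totalDegree_finset_sum _ _).trans (Finset.sup_le fun a ha => ?_)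
  refine (totalDegree_smul_le _ _).trans ?_
  refine (P_sub_monomial ht a).trans ?_
  refine Nat.sub_le_sub_right ?_ 2
  rw [sum_eq_finsupp_sum]
  exact le_totalDegree ha

lemma T_injective {t : ℝ} (ht : 0 < t) : Function.Injective (T t n) := by
  have h0 : ∀ p : MvPolynomial (Fin n) ℂ, T t n p = 0 → p = 0 := by
    intro p hTp
    by_contra hne
    have hdeg : p.totalDegree ≤ p.totalDegree - 2 := by
      have heq : p = -(T t n p - p) := by rw [hTp]; ring
      calc p.totalDegree = (-(T t n p - p)).totalDegree := by rw [← heq]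
        _ = (T t n p - p).totalDegree := totalDegree_neg _
        _ ≤ p.totalDegree - 2 := deg_T_sub ht p
    have hd0 : p.totalDegree = 0 := by omega
    have hsupp : p.support ⊆ {0} := by
      intro a ha
      simp only [Finset.mem_singleton]
      ext x
      simpa using (totalDegree_eq_zero_iff (Fin n) p).mp hd0 a ha x
    rcases Finset.subset_singleton_iff.mp hsupp with h|h
    · exact hne (support_eq_empty.mp h)
    · have hc : coeff 0 p ≠ 0 := by
        rw [← mem_support_iff, h]
        exact Finset.mem_singleton_self 0
      have hTC : T t n p = C (coeff 0 p) := by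
        rw [T_apply, h, Finset.sum_singleton, P_zero ht, smul_eq_C_mul, mul_one]
      rw [hTp] at hTC
      exact hc (by simpa using hTC.symm)
  intro p p' h
  have : T t n (p - p') = 0 := by rw [map_sub, h, sub_self]
  exact sub_eq_zero.mp (h0 _ this)

end S18

open S18 in
/-- Convolution with the heat kernel
`h_t(x) = (πt)^{-n/2} e^{-‖x‖²/t}` is a linear bijection of the space of (complex)
polynomial functions on `ℝ^n` of total degree at most `m` onto itself, and for each such
polynomial `p` the difference `(h_t * p) - p` is a polynomial of total degree at most
`m - 2` (in particular the top-degree homogeneous part is preserved). -/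
theorem stmt_18 (n m : ℕ) (hn : 1 ≤ n) (t : ℝ) (ht : 0 < t) :
    ∃ Φ : MvPolynomial.restrictTotalDegree (Fin n) ℂ m ≃ₗ[ℂ]
        MvPolynomial.restrictTotalDegree (Fin n) ℂ m,
      ∀ (p : MvPolynomial (Fin n) ℂ) (hp : p ∈ MvPolynomial.restrictTotalDegree (Fin n) ℂ m),
        (∀ x : Fin n → ℝ,
          ∫ y : Fin n → ℝ,
              MvPolynomial.eval (fun i => ((x i - y i : ℝ) : ℂ)) p *
                ((((Real.pi * t) ^ (-(n : ℝ) / 2) * Real.exp (-(∑ i, y i ^ 2) / t) : ℝ)) : ℂ)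
            = MvPolynomial.eval (fun i => ((x i : ℝ) : ℂ))
                ((Φ ⟨p, hp⟩ : MvPolynomial.restrictTotalDegree (Fin n) ℂ m) :
                  MvPolynomial (Fin n) ℂ)) ∧
        ((Φ ⟨p, hp⟩ : MvPolynomial (Fin n) ℂ) - p) ∈
          MvPolynomial.restrictTotalDegree (Fin n) ℂ (m - 2) := by
  classical
  set S := MvPolynomial.restrictTotalDegree (Fin n) ℂ m with hS
  have hTS : ∀ p ∈ S, T t n p ∈ S := by
    intro p hp
    rw [hS, MvPolynomial.mem_restrictTotalDegree] at *
    exact (deg_T_le t p).trans hp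
  set Φ₀ : S →ₗ[ℂ] S := (T t n).restrict hTS with hΦ₀
  have hinj : Function.Injective Φ₀ := by
    intro u v h
    apply Subtype.ext
    apply T_injective ht
    have := congrArg (Subtype.val) h
    simpa [hΦ₀, LinearMap.restrict_apply] using this
  have hbij : Function.Bijective Φ₀ :=
    ⟨hinj, (LinearMap.injective_iff_surjective).mp hinj⟩
  refine ⟨LinearEquiv.ofBijective Φ₀ hbij, fun p hp => ⟨?_, ?_⟩⟩
  · intro x
    have hcoe : ((LinearEquiv.ofBijective Φ₀ hbij ⟨p, hp⟩ : S) : MvPolynomial (Fin n) ℂ)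
        = T t n p := by
      simp [hΦ₀, LinearMap.restrict_apply]
    rw [hcoe]
    rw [← main_integral ht p x]
    refine integral_congr_ae (Filter.Eventually.of_forall fun y => ?_)
    beta_reduce
    congr 1
    exact congrArg Complex.ofReal (ker_prod ht y)
  · have hcoe : ((LinearEquiv.ofBijective Φ₀ hbij ⟨p, hp⟩ : S) : MvPolynomial (Fin n) ℂ)
        = T t n p := by
      simp [hΦ₀, LinearMap.restrict_apply]
    rw [hcoe, MvPolynomial.mem_restrictTotalDegree]
    refine (deg_T_sub ht p).trans (Nat.sub_le_sub_right ?_ 2)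
    rw [hS, MvPolynomial.mem_restrictTotalDegree] at hp
    exact hp

end
end
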